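/- arXiv:1510.05597 — 4 statements merged into one kernel-verified Lean document; each statement's English description precedes it below -/
import Mathlib

section
/- If a field K is complete with respect to a discrete valuation v, then every discrete valuation on K (with value group the integers) is equivalent to v. -/
noncomputable section

open Filter Topology Multiplicative WithZero IsUltrametricDist

namespace FKS

section Normed

variable {K : Type*} [NormedField K] [IsUltrametricDist K]

lemma norm_sub_le_max' (a b : K) : ‖a - b‖ ≤ max ‖a‖ ‖b‖ := by
  rw [sub_eq_add_neg]
  simpa using norm_add_le_max a (-b)

lemma norm_one_add_pow_sub_one (u : K) (hu : ‖u‖ ≤ 1) (i : ℕ) :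
    ‖(1 + u) ^ i - 1‖ ≤ ‖u‖ := by
  induction i with
  | zero => simpa using norm_nonneg u
  | succ i ih =>
    have h1 : ‖(1 : K) + u‖ ≤ 1 := le_trans (norm_add_le_max 1 u) (by simp [hu])
    have hexp : (1 + u) ^ (i + 1) - 1 = ((1 + u) ^ i - 1) * (1 + u) + u := by ring
    rw [hexp]
    refine le_trans (norm_add_le_max _ _) (max_le ?_ le_rfl)
    rw [norm_mul]
    calc ‖(1 + u) ^ i - 1‖ * ‖1 + u‖ ≤ ‖u‖ * 1 :=
          mul_le_mul ih h1 (norm_nonneg _) (norm_nonneg _)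
      _ = ‖u‖ := mul_one _

/-- bound on `g d - g e` where `g d = (1+d)^n - 1 - n*d`. -/
lemma g_diff_bound (n : ℕ) (d e : K) (hd : ‖d‖ ≤ 1) (he : ‖e‖ ≤ 1) :
    ‖((1 + d) ^ n - 1 - n * d) - ((1 + e) ^ n - 1 - n * e)‖ ≤ max ‖d‖ ‖e‖ * ‖d - e‖ := by
  set S : K := ∑ i ∈ Finset.range n, (1 + d) ^ i * (1 + e) ^ (n - 1 - i) with hS
  have hgeom : S * ((1 + d) - (1 + e)) = (1 + d) ^ n - (1 + e) ^ n := geom_sum₂_mul _ _ n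
  have hfact : ((1 + d) ^ n - 1 - n * d) - ((1 + e) ^ n - 1 - n * e)
      = (S - n) * (d - e) := by
    have h2 : (1 + d) - (1 + e) = d - e := by ring
    rw [h2] at hgeom
    linear_combination -hgeom
  rw [hfact, norm_mul]
  refine mul_le_mul_of_nonneg_right ?_ (norm_nonneg _)
  -- ‖S - n‖ ≤ max ‖d‖ ‖e‖
  have hSn : S - (n : K) = ∑ i ∈ Finset.range n, ((1 + d) ^ i * (1 + e) ^ (n - 1 - i) - 1) := by
    rw [Finset.sum_sub_distrib]
    simp [hS]
  rw [hSn]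
  refine norm_sum_le_of_forall_le_of_nonneg (le_max_iff.mpr (Or.inl (norm_nonneg _))) ?_
  intro i _
  have hd1 : ‖(1 + d) ^ i - 1‖ ≤ ‖d‖ := norm_one_add_pow_sub_one d hd i
  have he1 : ‖(1 + e) ^ (n - 1 - i) - 1‖ ≤ ‖e‖ := norm_one_add_pow_sub_one e he _
  have hne : ‖(1 + e) ^ (n - 1 - i)‖ ≤ 1 := by
    calc ‖(1 + e) ^ (n - 1 - i)‖ = ‖(1:K) + e‖ ^ (n - 1 - i) := norm_pow _ _
      _ ≤ 1 ^ (n - 1 - i) := by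
          gcongr
          exact le_trans (norm_add_le_max 1 e) (by simp [he])
      _ = 1 := one_pow _
  have hexp : (1 + d) ^ i * (1 + e) ^ (n - 1 - i) - 1
      = ((1 + d) ^ i - 1) * (1 + e) ^ (n - 1 - i) + ((1 + e) ^ (n - 1 - i) - 1) := by ring
  rw [hexp]
  refine le_trans (norm_add_le_max _ _) (max_le ?_ (le_max_of_le_right he1))
  rw [norm_mul]
  refine le_max_of_le_left ?_
  calc ‖(1 + d) ^ i - 1‖ * ‖(1 + e) ^ (n - 1 - i)‖ ≤ ‖d‖ * 1 :=
        mul_le_mul hd1 hne (norm_nonneg _) (norm_nonneg _)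
    _ = ‖d‖ := mul_one _

/-- Hensel-type statement: in a complete ultrametric field, `1 + c` with `‖c‖ < 1`
is an `n`-th power whenever `‖n‖ = 1`. -/
lemma exists_pow_eq [CompleteSpace K] {c : K} (hc : ‖c‖ < 1) {n : ℕ}
    (hn : ‖(n : K)‖ = 1) : ∃ y : K, y ^ n = 1 + c := by
  have hn0 : (n : K) ≠ 0 := by
    intro h
    rw [h, norm_zero] at hn
    norm_num at hn
  set F : K → K := fun d => (c - ((1 + d) ^ n - 1 - n * d)) / n with hF
  have hgd : ∀ d : K, ‖d‖ ≤ ‖c‖ → ‖(1 + d) ^ n - 1 - n * d‖ ≤ ‖c‖ := by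
    intro d hd
    have hd1 : ‖d‖ ≤ 1 := hd.trans hc.le
    have h3 : (1 + d) ^ n - 1 - (n:K) * d
        = ((1 + d) ^ n - 1 - n * d) - ((1 + (0:K)) ^ n - 1 - n * 0) := by ring
    rw [h3]
    calc ‖((1 + d) ^ n - 1 - (n:K) * d) - ((1 + (0:K)) ^ n - 1 - n * 0)‖
        ≤ max ‖d‖ ‖(0:K)‖ * ‖d - 0‖ := g_diff_bound n d 0 hd1 (by simp)
      _ = ‖d‖ * ‖d‖ := by simp [max_eq_left (norm_nonneg d)]
      _ ≤ ‖c‖ * 1 := mul_le_mul hd hd1 (norm_nonneg _) (norm_nonneg _)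
      _ = ‖c‖ := mul_one _
  have hF1 : ∀ d : K, ‖d‖ ≤ ‖c‖ → ‖F d‖ ≤ ‖c‖ := by
    intro d hd
    rw [hF]
    simp only [norm_div, hn, div_one]
    exact le_trans (norm_sub_le_max' _ _) (max_le le_rfl (hgd d hd))
  have hF2 : ∀ d e : K, ‖d‖ ≤ ‖c‖ → ‖e‖ ≤ ‖c‖ → ‖F d - F e‖ ≤ ‖c‖ * ‖d - e‖ := by
    intro d e hd he
    have hdiff : F d - F e
        = (((1 + e) ^ n - 1 - n * e) - ((1 + d) ^ n - 1 - n * d)) / n := by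
      rw [hF]
      field_simp
      try ring
    rw [hdiff, norm_div, hn, div_one, ← norm_neg]
    have hneg : -((((1 + e) ^ n - 1 - n * e) - ((1 + d) ^ n - 1 - n * d)))
        = (((1 + d) ^ n - 1 - n * d) - ((1 + e) ^ n - 1 - n * e)) := by ring
    rw [hneg]
    calc ‖((1 + d) ^ n - 1 - n * d) - ((1 + e) ^ n - 1 - n * e)‖
        ≤ max ‖d‖ ‖e‖ * ‖d - e‖ :=
          g_diff_bound n d e (hd.trans hc.le) (he.trans hc.le)
      _ ≤ ‖c‖ * ‖d - e‖ := by gcongr; exact max_le hd he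
  -- the iteration sequence
  have hbound : ∀ k : ℕ, ‖F^[k] 0‖ ≤ ‖c‖ := by
    intro k
    induction k with
    | zero => simpa using norm_nonneg c
    | succ k ih =>
      rw [Function.iterate_succ_apply']
      exact hF1 _ ih
  have hdist : ∀ k : ℕ, dist (F^[k] 0) (F^[k + 1] 0) ≤ ‖c‖ * ‖c‖ ^ k := by
    intro k
    induction k with
    | zero =>
      simp only [Function.iterate_zero_apply, Function.iterate_one, pow_zero, mul_one]
      rw [dist_eq_norm, zero_sub, norm_neg]
      exact hF1 0 (by simpa using norm_nonneg c)
    | succ k ih =>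
      rw [Function.iterate_succ_apply', Function.iterate_succ_apply' F (k + 1),
        dist_eq_norm]
      calc ‖F (F^[k] 0) - F (F^[k + 1] 0)‖
          ≤ ‖c‖ * ‖F^[k] 0 - F^[k + 1] 0‖ := hF2 _ _ (hbound k) (hbound (k + 1))
        _ = ‖c‖ * dist (F^[k] 0) (F^[k + 1] 0) := by rw [dist_eq_norm]
        _ ≤ ‖c‖ * (‖c‖ * ‖c‖ ^ k) := by
            have := mul_le_mul_of_nonneg_left ih (norm_nonneg c)
            simpa using this
        _ = ‖c‖ * ‖c‖ ^ (k + 1) := by ring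
  have hcauchy : CauchySeq (fun k => F^[k] 0) := cauchySeq_of_le_geometric ‖c‖ ‖c‖ hc hdist
  obtain ⟨y', hy'⟩ := cauchySeq_tendsto_of_complete hcauchy
  have hFcont : Continuous F := by
    rw [hF]
    exact (continuous_const.sub ((((continuous_const.add continuous_id).pow n).sub
      continuous_const).sub (continuous_const.mul continuous_id))).div_const _
  have h1 : Tendsto (fun k => F^[k + 1] 0) atTop (𝓝 (F y')) := by
    have h1' := (hFcont.tendsto y').comp hy'
    have hcomp : (F ∘ fun k => F^[k] (0:K)) = fun k => F^[k + 1] 0 :=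
      funext fun k => (Function.iterate_succ_apply' F k 0).symm
    rwa [hcomp] at h1'
  have h2 : Tendsto (fun k => F^[k + 1] 0) atTop (𝓝 y') :=
    hy'.comp (tendsto_add_atTop_nat 1)
  have hfix : F y' = y' := tendsto_nhds_unique h1 h2
  rw [hF] at hfix
  simp only at hfix
  have := (div_eq_iff hn0).mp hfix
  exact ⟨1 + y', by linear_combination -this⟩

end Normed

lemma exists_pow_lt' {γ δ : ℤᵐ⁰} (hγ1 : γ < 1) (hδ : δ ≠ 0) :
    ∃ n : ℕ, γ ^ n < δ := by
  set f := WithZeroMulInt.toNNReal (ne_zero_of_lt (one_lt_two (α := NNReal)))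
  have hmono := WithZeroMulInt.toNNReal_strictMono (one_lt_two (α := NNReal))
  have h1 : f γ < 1 := by
    have := hmono hγ1
    simpa using this
  have h0 : 0 < f δ := by
    rw [pos_iff_ne_zero]
    intro h
    exact hδ ((map_eq_zero f).mp h)
  obtain ⟨n, hn⟩ := exists_pow_lt_of_lt_one h0 h1
  refine ⟨n, ?_⟩
  have : f (γ ^ n) < f δ := by rwa [map_pow]
  exact hmono.lt_iff_lt.mp this

variable {K : Type*} [Field K]

lemma exists_val_lt_one_lt (u u' : Valuation K ℤᵐ⁰) (hu' : Function.Surjective u')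
    {x : K} (h1 : u x < 1) (h2 : 1 ≤ u' x) : ∃ c : K, u c < 1 ∧ 1 < u' c := by
  rcases h2.lt_or_eq with h | h
  · exact ⟨x, h1, h⟩
  · obtain ⟨t, ht⟩ := hu' (↑(ofAdd (1 : ℤ)))
    have hx0 : x ≠ 0 := by
      rintro rfl
      rw [map_zero] at h
      exact zero_ne_one h.symm
    have hux0 : u x ≠ 0 := (Valuation.ne_zero_iff u).mpr hx0
    have htv : (1 : ℤᵐ⁰) < u' t := by
      rw [ht, ← WithZero.coe_one, WithZero.coe_lt_coe]
      rw [show (1 : Multiplicative ℤ) = ofAdd (0:ℤ) from rfl, Multiplicative.ofAdd_lt]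
      exact one_pos
    have ht0 : t ≠ 0 := by
      intro h0
      rw [h0, map_zero] at htv
      exact not_lt_zero' htv
    have hut0 : u t ≠ 0 := (Valuation.ne_zero_iff u).mpr ht0
    obtain ⟨n, hn⟩ := exists_pow_lt' h1 (inv_ne_zero hut0)
    refine ⟨t * x ^ n, ?_, ?_⟩
    · rw [map_mul, map_pow]
      obtain ⟨a, ha⟩ := WithZero.ne_zero_iff_exists.mp hut0
      obtain ⟨g, hg⟩ := WithZero.ne_zero_iff_exists.mp hux0
      rw [← ha, ← hg] at hn ⊢
      rw [← WithZero.coe_pow, ← WithZero.coe_inv, WithZero.coe_lt_coe] at hn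
      rw [← WithZero.coe_pow, ← WithZero.coe_mul, ← WithZero.coe_one, WithZero.coe_lt_coe]
      calc a * g ^ n < a * a⁻¹ := mul_lt_mul_right hn a
        _ = 1 := mul_inv_cancel a
    · rw [map_mul, map_pow, ← h, one_pow, mul_one, ht, ← WithZero.coe_one,
        WithZero.coe_lt_coe]
      rw [show (1 : Multiplicative ℤ) = ofAdd (0:ℤ) from rfl, Multiplicative.ofAdd_lt]
      exact one_pos

lemma val_natCast_le_one (u : Valuation K ℤᵐ⁰) (k : ℕ) : u (k : K) ≤ 1 := by
  induction k with
  | zero => simp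
  | succ k ih =>
    push_cast
    exact le_trans (u.map_add _ _) (by simp [ih])

lemma val_intCast_le_one (u : Valuation K ℤᵐ⁰) (k : ℤ) : u (k : K) ≤ 1 := by
  rcases le_or_gt 0 k with h | h
  · lift k to ℕ using h
    exact_mod_cast val_natCast_le_one u k
  · have hk : ((k : K)) = -((-k : ℤ) : K) := by push_cast; ring
    rw [hk, Valuation.map_neg]
    have h0 : (0:ℤ) ≤ -k := by omega
    lift (-k) to ℕ using h0 with m hm
    exact_mod_cast val_natCast_le_one u m

lemma not_both_primes_lt_one (u : Valuation K ℤᵐ⁰) {p q : ℕ} (hp : p.Prime) (hq : q.Prime)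
    (hne : p ≠ q) (h1 : u (p : K) < 1) (h2 : u (q : K) < 1) : False := by
  have hco : IsCoprime (p : ℤ) (q : ℤ) := ((Nat.coprime_primes hp hq).mpr hne).isCoprime
  obtain ⟨a, b, hab⟩ := hco
  have h1' : u ((a : K) * (p : K)) < 1 := by
    rw [map_mul]
    calc u (a : K) * u (p : K) ≤ 1 * u (p : K) :=
          mul_le_mul_left (val_intCast_le_one u a) _
      _ = u (p : K) := one_mul _
      _ < 1 := h1
  have h2' : u ((b : K) * (q : K)) < 1 := by
    rw [map_mul]
    calc u (b : K) * u (q : K) ≤ 1 * u (q : K) :=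
          mul_le_mul_left (val_intCast_le_one u b) _
      _ = u (q : K) := one_mul _
      _ < 1 := h2
  have heq : ((a : K) * p + (b : K) * q) = 1 := by
    have := congrArg (fun z : ℤ => (z : K)) hab
    push_cast at this
    simpa using this
  have hlt : u ((a : K) * (p : K) + (b : K) * (q : K)) < 1 :=
    lt_of_le_of_lt (u.map_add _ _) (max_lt h1' h2')
  rw [heq, map_one] at hlt
  exact lt_irrefl _ hlt

end FKS

end

/-- **F. K. Schmidt's theorem.** If a field `K` is complete with respect to a discrete
valuation `v` (a surjective valuation with value group `ℤ`), then every discrete valuation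
on `K` (with value group the integers) is equivalent to `v`. -/
theorem complete_discrete_valuation_unique
    (K : Type*) [Field K] [hv : Valued K (WithZero (Multiplicative ℤ))]
    [CompleteSpace K]
    (hv_surj : Function.Surjective hv.v)
    (w : Valuation K (WithZero (Multiplicative ℤ)))
    (hw_surj : Function.Surjective w) :
    Valuation.IsEquiv w hv.v := by
  classical
  haveI hrk : Valuation.RankOne hv.v :=
    { hom' := (WithZeroMulInt.toNNReal (ne_zero_of_lt (one_lt_two (α := NNReal)))).comp
        MonoidWithZeroHom.ValueGroup₀.embedding
      strictMono' := (WithZeroMulInt.toNNReal_strictMono (one_lt_two (α := NNReal))).comp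
        MonoidWithZeroHom.ValueGroup₀.embedding_strictMono
      exists_val_nontrivial := by
        obtain ⟨x, hx⟩ := hv_surj (↑(Multiplicative.ofAdd (1 : ℤ)))
        refine ⟨x, ?_, ?_⟩ <;> rw [hx]
        · exact WithZero.coe_ne_zero
        · rw [← WithZero.coe_one]
          intro h
          have := WithZero.coe_inj.mp h
          simpa using congrArg Multiplicative.toAdd this }
  rw [Valuation.isEquiv_iff_val_lt_one]
  refine fun {x} => ?_
  by_contra hxiff
  have hx : (w x < 1 ∧ 1 ≤ hv.v x) ∨ (1 ≤ w x ∧ hv.v x < 1) := by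
    rcases lt_or_ge (w x) 1 with h1 | h1 <;> rcases lt_or_ge (hv.v x) 1 with h2 | h2
    · exact absurd ⟨fun _ => h2, fun _ => h1⟩ hxiff
    · exact Or.inl ⟨h1, h2⟩
    · exact Or.inr ⟨h1, h2⟩
    · exact absurd ⟨fun h => absurd h (not_lt.mpr h1),
        fun h => absurd h (not_lt.mpr h2)⟩ hxiff
  -- Step 1: find `c` with `v c < 1 < w c`.
  have hcex : ∃ c : K, hv.v c < 1 ∧ 1 < w c := by
    rcases hx with ⟨h1, h2⟩ | ⟨h1, h2⟩
    · obtain ⟨c, hc1, hc2⟩ := FKS.exists_val_lt_one_lt w hv.v hv_surj h1 h2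
      have hc0 : c ≠ 0 := by
        intro h0
        rw [h0, map_zero] at hc2
        exact not_lt_zero' hc2
      have hwc0 : (0 : WithZero (Multiplicative ℤ)) < w c := zero_lt_iff.mpr ((Valuation.ne_zero_iff w).mpr hc0)
      have hvc0 : (0 : WithZero (Multiplicative ℤ)) < hv.v c := zero_lt_iff.mpr ((Valuation.ne_zero_iff hv.v).mpr hc0)
      refine ⟨c⁻¹, ?_, ?_⟩
      · rw [map_inv₀]
        exact (inv_lt_one₀ hvc0).mpr hc2
      · rw [map_inv₀]
        exact (one_lt_inv₀ hwc0).mpr hc1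
    · exact FKS.exists_val_lt_one_lt hv.v w hw_surj h2 h1
  obtain ⟨c, hc1, hc2⟩ := hcex
  have hc0 : c ≠ 0 := by
    intro h0
    rw [h0, map_zero] at hc2
    exact not_lt_zero' hc2
  -- Step 2: `w (1 + c) = w c`.
  have hwz : w (1 + c) = w c := by
    rw [add_comm]
    have hne : w c ≠ w 1 := by rw [map_one]; exact ne_of_gt hc2
    rw [Valuation.map_add_of_distinct_val w hne, map_one]
    exact max_eq_left hc2.le
  have hwc0 : w c ≠ 0 := (Valuation.ne_zero_iff w).mpr hc0
  obtain ⟨a, ha⟩ := WithZero.ne_zero_iff_exists.mp hwc0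
  have hapos : (0 : ℤ) < Multiplicative.toAdd a := by
    have h1a : (1 : WithZero (Multiplicative ℤ)) < ↑a := by rw [ha]; exact hc2
    rw [← WithZero.coe_one, WithZero.coe_lt_coe] at h1a
    rwa [show (1 : Multiplicative ℤ) = Multiplicative.ofAdd (0:ℤ) from rfl,
      show a = Multiplicative.ofAdd (Multiplicative.toAdd a) from rfl,
      Multiplicative.ofAdd_lt] at h1a
  -- Step 3: find a prime `ℓ` exceeding the exponent of `w c` with `v ℓ = 1`.
  obtain ⟨p, hple, hp⟩ := Nat.exists_infinite_primes ((Multiplicative.toAdd a).natAbs + 1)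
  obtain ⟨q, hqle, hq⟩ := Nat.exists_infinite_primes (p + 1)
  have hpq : p ≠ q := by omega
  have hex : ∃ ℓ : ℕ, ℓ.Prime ∧ (Multiplicative.toAdd a).natAbs < ℓ ∧ hv.v (ℓ : K) = 1 := by
    rcases (FKS.val_natCast_le_one hv.v p).lt_or_eq with h | h
    · rcases (FKS.val_natCast_le_one hv.v q).lt_or_eq with h2 | h2
      · exact absurd h2 fun h2 => FKS.not_both_primes_lt_one hv.v hp hq hpq h h2
      · exact ⟨q, hq, by omega, h2⟩
    · exact ⟨p, hp, by omega, h⟩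
  obtain ⟨ℓ, hℓp, hℓgt, hℓv⟩ := hex
  -- Step 4: Hensel via completeness.
  letI : NormedField K := Valued.toNormedField K (WithZero (Multiplicative ℤ))
  haveI : IsUltrametricDist K :=
    IsUltrametricDist.isUltrametricDist_of_forall_norm_add_le_max_norm
      (by intro x y; exact Valuation.norm_add_le hv.v x y)
  haveI hcomp : CompleteSpace K := ‹CompleteSpace K›
  have hcnorm : ‖c‖ < 1 := Valued.toNormedField.norm_lt_one_iff.mpr hc1
  have hℓnorm : ‖(ℓ : K)‖ = 1 :=
    le_antisymm (Valued.toNormedField.norm_le_one_iff.mpr (le_of_eq hℓv))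
      (Valued.toNormedField.one_le_norm_iff.mpr (ge_of_eq hℓv))
  obtain ⟨y, hy⟩ := FKS.exists_pow_eq hcnorm hℓnorm
  -- Step 5: derive the contradiction.
  have hwy : (w y) ^ ℓ = (↑a : WithZero (Multiplicative ℤ)) := by
    rw [← map_pow, hy, hwz, ← ha]
  have hwy0 : w y ≠ 0 := by
    intro h0
    rw [h0, zero_pow hℓp.ne_zero] at hwy
    exact WithZero.zero_ne_coe hwy
  obtain ⟨b, hb⟩ := WithZero.ne_zero_iff_exists.mp hwy0
  rw [← hb, ← WithZero.coe_pow, WithZero.coe_inj] at hwy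
  have hdiv : (ℓ : ℤ) * Multiplicative.toAdd b = Multiplicative.toAdd a := by
    have := congrArg Multiplicative.toAdd hwy
    rw [toAdd_pow] at this
    simpa [nsmul_eq_mul] using this
  have hℓpos : (0:ℤ) < (ℓ : ℤ) := by exact_mod_cast hℓp.pos
  have hma : Multiplicative.toAdd a < (ℓ : ℤ) := by omega
  rcases le_or_gt (Multiplicative.toAdd b) 0 with hb0 | hb0
  · have : (ℓ : ℤ) * Multiplicative.toAdd b ≤ 0 :=
      mul_nonpos_of_nonneg_of_nonpos hℓpos.le hb0
    omega
  · have h1b : (1:ℤ) ≤ Multiplicative.toAdd b := hb0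
    have : (ℓ : ℤ) ≤ (ℓ : ℤ) * Multiplicative.toAdd b := le_mul_of_one_le_right hℓpos.le h1b
    omega
end

section
/- Any field isomorphism between two fields, each complete with respect to a discrete valuation, restricts to a ring isomorphism between their valuation rings, and is automatically a homeomorphism for the valuation topologies. -/
open Multiplicative WithZero Filter Topology

namespace FKSAux

abbrev Zm0 := WithZero (Multiplicative ℤ)

lemma Zm0.div_lt_one {a b : Zm0} (hb : b ≠ 0) : a / b < 1 ↔ a < b := by
  induction a using WithZero.recZeroCoe with
  | zero => simp [zero_lt_iff, hb]
  | coe x =>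
    obtain ⟨y, rfl⟩ := WithZero.ne_zero_iff_exists.mp hb
    rw [← WithZero.coe_div, ← WithZero.coe_one, WithZero.coe_lt_coe, WithZero.coe_lt_coe]
    exact div_lt_one'

lemma Zm0.one_lt_div {a b : Zm0} (hb : b ≠ 0) : 1 < a / b ↔ b < a := by
  induction a using WithZero.recZeroCoe with
  | zero => simp [zero_lt_iff, hb, not_lt_zero', zero_div]
  | coe x =>
    obtain ⟨y, rfl⟩ := WithZero.ne_zero_iff_exists.mp hb
    rw [← WithZero.coe_div, ← WithZero.coe_one, WithZero.coe_lt_coe, WithZero.coe_lt_coe]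
    exact one_lt_div'

lemma Zm0.exists_ofAdd {γ : Zm0} (h : γ ≠ 0) :
    ∃ a : ℤ, γ = ((ofAdd a : Multiplicative ℤ) : Zm0) := by
  obtain ⟨a, rfl⟩ := WithZero.ne_zero_iff_exists.mp h
  exact ⟨toAdd a, by simp⟩

lemma Zm0.coe_le_coe_iff {a b : ℤ} :
    ((ofAdd a : Multiplicative ℤ) : Zm0) ≤ ((ofAdd b : Multiplicative ℤ) : Zm0) ↔ a ≤ b := by
  rw [WithZero.coe_le_coe]; exact Multiplicative.ofAdd_le

lemma Zm0.coe_lt_coe_iff {a b : ℤ} :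
    ((ofAdd a : Multiplicative ℤ) : Zm0) < ((ofAdd b : Multiplicative ℤ) : Zm0) ↔ a < b := by
  rw [WithZero.coe_lt_coe]; exact Multiplicative.ofAdd_lt

lemma Zm0.coe_le_one_iff {a : ℤ} : ((ofAdd a : Multiplicative ℤ) : Zm0) ≤ 1 ↔ a ≤ 0 := by
  rw [show (1 : Zm0) = ((ofAdd (0 : ℤ) : Multiplicative ℤ) : Zm0) by simp]
  exact Zm0.coe_le_coe_iff

lemma Zm0.coe_lt_one_iff {a : ℤ} : ((ofAdd a : Multiplicative ℤ) : Zm0) < 1 ↔ a < 0 := by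
  rw [show (1 : Zm0) = ((ofAdd (0 : ℤ) : Multiplicative ℤ) : Zm0) by simp]
  exact Zm0.coe_lt_coe_iff

lemma Zm0.one_lt_coe_iff {a : ℤ} : 1 < ((ofAdd a : Multiplicative ℤ) : Zm0) ↔ 0 < a := by
  rw [show (1 : Zm0) = ((ofAdd (0 : ℤ) : Multiplicative ℤ) : Zm0) by simp]
  exact Zm0.coe_lt_coe_iff

lemma Zm0.coe_pow (a : ℤ) (n : ℕ) :
    ((ofAdd a : Multiplicative ℤ) : Zm0) ^ n = ((ofAdd ((n : ℤ) * a) : Multiplicative ℤ) : Zm0) := by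
  have h : (ofAdd a : Multiplicative ℤ) ^ n = (ofAdd ((n : ℤ) * a) : Multiplicative ℤ) := by
    rw [← ofAdd_nsmul, nsmul_eq_mul]
  rw [← WithZero.coe_pow, h]

lemma Zm0.pow_anti {t : Zm0} (ht : t ≤ 1) {a b : ℕ} (h : a ≤ b) : t ^ b ≤ t ^ a := by
  have hab : t ^ b = t ^ a * t ^ (b - a) := by rw [← pow_add]; congr 1; omega
  rw [hab]
  calc t ^ a * t ^ (b - a) ≤ t ^ a * 1 := mul_le_mul_right (pow_le_one' ht _) _
  _ = t ^ a := mul_one _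

lemma Zm0.pow_lt_of_lt_one {t : Zm0} (h0 : t ≠ 0) (h1 : t < 1) {γ : Zm0} (hγ : γ ≠ 0) :
    ∃ N : ℕ, ∀ n ≥ N, t ^ n < γ := by
  obtain ⟨a, rfl⟩ := Zm0.exists_ofAdd h0
  obtain ⟨b, rfl⟩ := Zm0.exists_ofAdd hγ
  have ha : a < 0 := Zm0.coe_lt_one_iff.mp h1
  refine ⟨(b.natAbs + 1), fun n hn => ?_⟩
  rw [Zm0.coe_pow, Zm0.coe_lt_coe_iff]
  have h1 : (n : ℤ) * a ≤ -n := by nlinarith [Int.natCast_nonneg n]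
  have h2 : (b.natAbs : ℤ) + 1 ≤ (n : ℤ) := by exact_mod_cast hn
  have h3 : -(b.natAbs : ℤ) ≤ b := by rcases Int.natAbs_eq b with h | h <;> omega
  omega

variable {K : Type*} [Field K]

lemma val_natCast_le_one (v : Valuation K Zm0) (n : ℕ) : v (n : K) ≤ 1 := by
  induction n with
  | zero => simp
  | succ n ih =>
      push_cast
      exact le_trans (v.map_add _ _) (max_le ih (le_of_eq v.map_one))

/-- There is ℓ ∈ {2,3} whose image in K is a w-unit. -/
lemma exists_nat_val_eq_one (w : Valuation K Zm0) :
    ∃ ℓ : ℕ, 2 ≤ ℓ ∧ w ((ℓ : ℕ) : K) = 1 := by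
  by_cases h2 : w ((2 : ℕ) : K) = 1
  · exact ⟨2, le_refl _, h2⟩
  · refine ⟨3, by norm_num, ?_⟩
    by_contra h3
    have h2' : w ((2 : ℕ) : K) < 1 := lt_of_le_of_ne (val_natCast_le_one w 2) h2
    have h3' : w ((3 : ℕ) : K) < 1 := lt_of_le_of_ne (val_natCast_le_one w 3) h3
    have heq : ((3 : ℕ) : K) - ((2 : ℕ) : K) = 1 := by push_cast; ring
    have hlt : w (((3 : ℕ) : K) - ((2 : ℕ) : K)) < 1 :=
      lt_of_le_of_lt (w.map_sub _ _) (max_lt h3' h2')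
    rw [heq, w.map_one] at hlt
    exact absurd hlt (lt_irrefl _)

/-- If the unit ball of v is contained in that of w (w surjective ℤ-valued), then conversely. -/
lemma le_one_iff_of_imp {v w : Valuation K Zm0} (hw : Function.Surjective w)
    (h : ∀ x, v x ≤ 1 → w x ≤ 1) : ∀ x, w x ≤ 1 → v x ≤ 1 := by
  intro x hx
  by_contra hvx
  push_neg at hvx
  have hx0 : x ≠ 0 := by
    rintro rfl; rw [v.map_zero] at hvx; exact absurd hvx (by simp)
  obtain ⟨m, hm⟩ := Zm0.exists_ofAdd (v.ne_zero_iff.mpr hx0)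
  have hm0 : 0 < m := Zm0.one_lt_coe_iff.mp (hm ▸ hvx)
  have hvy : v x⁻¹ = ((ofAdd (-m) : Multiplicative ℤ) : Zm0) := by
    rw [map_inv₀, hm, ← WithZero.coe_inv, ← ofAdd_neg]
  have hwy : w x⁻¹ ≤ 1 := h _ (by rw [hvy]; exact Zm0.coe_le_one_iff.mpr (by omega))
  have hwx0 : w x ≠ 0 := w.ne_zero_iff.mpr hx0
  have hwy1 : w x⁻¹ = 1 := by
    refine le_antisymm hwy ?_
    rw [map_inv₀]
    obtain ⟨k, hk⟩ := Zm0.exists_ofAdd hwx0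
    have hk0 : k ≤ 0 := Zm0.coe_le_one_iff.mp (hk ▸ hx)
    rw [hk, ← WithZero.coe_inv, ← ofAdd_neg,
      show (1 : Zm0) = ((ofAdd (0 : ℤ) : Multiplicative ℤ) : Zm0) by simp, Zm0.coe_le_coe_iff]
    omega
  obtain ⟨z, hz⟩ := hw ((ofAdd (1 : ℤ) : Multiplicative ℤ) : Zm0)
  have hwz : 1 < w z := by rw [hz]; exact Zm0.one_lt_coe_iff.mpr one_pos
  have hz0 : z ≠ 0 := by rintro rfl; rw [w.map_zero] at hwz; exact absurd hwz (by simp)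
  have hvz : 1 < v z := lt_of_not_ge fun hc => absurd (h z hc) (not_le.mpr hwz)
  obtain ⟨az, haz⟩ := Zm0.exists_ofAdd (v.ne_zero_iff.mpr hz0)
  have haz' : 0 < az := Zm0.one_lt_coe_iff.mp (haz ▸ hvz)
  have key : v (x⁻¹ ^ az.natAbs * z) ≤ 1 := by
    rw [v.map_mul, v.map_pow, hvy, haz, Zm0.coe_pow, ← WithZero.coe_mul, ← ofAdd_add,
      Zm0.coe_le_one_iff]
    have hna : (az.natAbs : ℤ) = az := Int.natAbs_of_nonneg haz'.le
    rw [hna]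
    nlinarith
  have hfin := h _ key
  rw [w.map_mul, w.map_pow, hwy1, one_pow, one_mul] at hfin
  exact absurd hfin (not_le.mpr hwz)

end FKSAux

namespace FKSAux

variable {L : Type*} [Field L]

/-- Taylor-type estimate for the binomial expansion. -/
lemma newton_key (v : Valuation L Zm0) {ℓ : ℕ} (hℓ : 2 ≤ ℓ)
    {y h : L} (hy : v y ≤ 1) (hh : v h ≤ 1) :
    v ((y + h) ^ ℓ - y ^ ℓ - (ℓ : L) * y ^ (ℓ - 1) * h) ≤ v h * v h := by
  obtain ⟨m, rfl⟩ : ∃ m, ℓ = m + 2 := ⟨ℓ - 2, by omega⟩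
  have hexp : (y + h) ^ (m + 2) - y ^ (m + 2) - ((m + 2 : ℕ) : L) * y ^ (m + 2 - 1) * h
      = ∑ k ∈ Finset.range (m + 1), y ^ k * h ^ (m + 2 - k) * ((m + 2).choose k : L) := by
    have e1 : m + 2 - (m + 1) = 1 := by omega
    have e2 : m + 2 - (m + 2) = 0 := by omega
    have e3 : m + 2 - 1 = m + 1 := by omega
    rw [add_pow, Finset.sum_range_succ, Finset.sum_range_succ, e1, e2, e3, Nat.choose_self,
      Nat.choose_succ_self_right]
    push_cast
    ring
  rw [hexp]
  apply Valuation.map_sum_le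
  intro k hk
  rw [Finset.mem_range] at hk
  rw [v.map_mul, v.map_mul, v.map_pow, v.map_pow]
  have h1 : v y ^ k ≤ 1 := pow_le_one' hy k
  have h2 : v (((m + 2).choose k : ℕ) : L) ≤ 1 := val_natCast_le_one v _
  have h3 : v h ^ (m + 2 - k) ≤ v h * v h := by
    have : m + 2 - k = 2 + (m - k) := by omega
    rw [this, pow_add, pow_two]
    calc v h * v h * v h ^ (m - k) ≤ v h * v h * 1 := mul_le_mul_right (pow_le_one' hh _) _
    _ = v h * v h := mul_one _
  calc v y ^ k * v h ^ (m + 2 - k) * v (((m + 2).choose k : ℕ) : L)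
      ≤ 1 * (v h * v h) * 1 := by
        exact mul_le_mul' (mul_le_mul' h1 h3) h2
  _ = v h * v h := by rw [one_mul, mul_one]

end FKSAux

namespace FKSAux

variable {L : Type*} [Field L]

section Root

variable [hv : Valued L Zm0] [CompleteSpace L]

/-- Hensel's lemma for ℓ-th roots near 1, by Newton iteration in a complete valued field. -/
lemma exists_pow_root {ℓ : ℕ} (hℓ : 2 ≤ ℓ) (hℓv : Valued.v ((ℓ : ℕ) : L) = 1)
    {u : L} (hu : Valued.v (u - 1) < 1) : ∃ y : L, y ^ ℓ = u := by
  classical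
  set v : Valuation L Zm0 := Valued.v with hvdef
  by_cases hu1 : u = 1
  · exact ⟨1, by rw [one_pow, hu1]⟩
  set t : Zm0 := v (u - 1) with ht
  have ht0 : t ≠ 0 := v.ne_zero_iff.mpr (sub_ne_zero.mpr hu1)
  have ht1 : t < 1 := hu
  have hℓ0 : ((ℓ : ℕ) : L) ≠ 0 := by
    intro hc
    rw [hc, v.map_zero] at hℓv
    exact zero_ne_one hℓv
  -- Newton step
  let F : L → L := fun y => y - (y ^ ℓ - u) / (((ℓ : ℕ) : L) * y ^ (ℓ - 1))
  let Y : ℕ → L := fun n => Nat.rec (1 : L) (fun _ y => F y) n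
  have hY0 : Y 0 = 1 := rfl
  have hYsucc : ∀ n, Y (n + 1) = F (Y n) := fun n => rfl
  -- invariants
  have inv : ∀ n, v (Y n - 1) ≤ t ∧ v (Y n ^ ℓ - u) ≤ t ^ (n + 1) := by
    intro n
    induction n with
    | zero =>
        refine ⟨by rw [hY0, sub_self, v.map_zero]; exact zero_le', ?_⟩
        rw [hY0, one_pow, pow_one, v.map_sub_swap]
    | succ n ih =>
        obtain ⟨ih1, ih2⟩ := ih
        set y := Y n with hy
        have hvy : v y = 1 := by
          have hy1 : y = 1 + (y - 1) := by ring
          rw [hy1]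
          exact v.map_one_add_of_lt (lt_of_le_of_lt ih1 ht1)
        have hy0 : y ≠ 0 := fun hc => by
          rw [hc, v.map_zero] at hvy; exact zero_ne_one hvy
        have hd0 : ((ℓ : ℕ) : L) * y ^ (ℓ - 1) ≠ 0 :=
          mul_ne_zero hℓ0 (pow_ne_zero _ hy0)
        have hvd : v (((ℓ : ℕ) : L) * y ^ (ℓ - 1)) = 1 := by
          rw [v.map_mul, v.map_pow, hℓv, hvy, one_pow, one_mul]
        set h : L := -((y ^ ℓ - u) / (((ℓ : ℕ) : L) * y ^ (ℓ - 1))) with hh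
        have hFy : F y = y + h := by rw [hh]; show y - _ = _; ring
        have hvh : v h = v (y ^ ℓ - u) := by
          rw [hh, v.map_neg, map_div₀, hvd, div_one]
        have hvh_le : v h ≤ t ^ (n + 1) := hvh ▸ ih2
        have htle1 : t ≤ 1 := ht1.le
        have htpow_le : t ^ (n + 1) ≤ t := by
          have := Zm0.pow_anti htle1 (a := 1) (b := n + 1) (by omega)
          rwa [pow_one] at this
        have hvh_le_t : v h ≤ t := le_trans hvh_le htpow_le
        have hvh_le_one : v h ≤ 1 := le_trans hvh_le_t htle1
        -- cancellation: y^ℓ - u + d * h = 0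
        have hcancel : y ^ ℓ - u + (((ℓ : ℕ) : L) * y ^ (ℓ - 1)) * h = 0 := by
          rw [hh]
          field_simp
          ring
        have herr2 : F y ^ ℓ - u = (y + h) ^ ℓ - y ^ ℓ - ((ℓ : ℕ) : L) * y ^ (ℓ - 1) * h := by
          rw [hFy]
          have : (y + h) ^ ℓ - u = (y + h) ^ ℓ - y ^ ℓ - ((ℓ : ℕ) : L) * y ^ (ℓ - 1) * h
              + (y ^ ℓ - u + (((ℓ : ℕ) : L) * y ^ (ℓ - 1)) * h) := by ring
          rw [this, hcancel, add_zero]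
        constructor
        · rw [hYsucc, ← hy, hFy]
          have hre : y + h - 1 = (y - 1) + h := by ring
          rw [hre]
          exact le_trans (v.map_add _ _) (max_le ih1 hvh_le_t)
        · rw [hYsucc, ← hy, herr2]
          have hkey := newton_key v hℓ (le_of_eq hvy) hvh_le_one
          refine le_trans hkey ?_
          calc v h * v h ≤ t ^ (n + 1) * t ^ (n + 1) := mul_le_mul' hvh_le hvh_le
          _ = t ^ (n + 1 + 1) * t ^ n := by rw [← pow_add, ← pow_add]; congr 1; omega
          _ ≤ t ^ (n + 1 + 1) * 1 := mul_le_mul_right (pow_le_one' htle1 _) _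
          _ = t ^ (n + 1 + 1) := mul_one _
  -- consecutive differences
  have hdiff : ∀ n, v (Y (n + 1) - Y n) ≤ t ^ (n + 1) := by
    intro n
    obtain ⟨ih1, ih2⟩ := inv n
    set y := Y n with hy
    have hvy : v y = 1 := by
      have hy1 : y = 1 + (y - 1) := by ring
      rw [hy1]
      exact v.map_one_add_of_lt (lt_of_le_of_lt ih1 ht1)
    have hvd : v (((ℓ : ℕ) : L) * y ^ (ℓ - 1)) = 1 := by
      rw [v.map_mul, v.map_pow, hℓv, hvy, one_pow, one_mul]
    have hstep : Y (n + 1) - Y n = -((y ^ ℓ - u) / (((ℓ : ℕ) : L) * y ^ (ℓ - 1))) := by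
      rw [hYsucc, ← hy]
      show F y - y = _
      ring
    rw [hstep, v.map_neg, map_div₀, hvd, div_one]
    exact ih2
  -- distant differences
  have hdiff' : ∀ n m, n ≤ m → v (Y m - Y n) ≤ t ^ (n + 1) := by
    intro n m hnm
    induction m, hnm using Nat.le_induction with
    | base => rw [sub_self, v.map_zero]; exact zero_le'
    | succ m hm ih =>
        have hsplit : Y (m + 1) - Y n = (Y (m + 1) - Y m) + (Y m - Y n) := by ring
        rw [hsplit]
        refine le_trans (v.map_add _ _) (max_le (le_trans (hdiff m) ?_) ih)
        exact Zm0.pow_anti ht1.le (by omega)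
  -- Cauchy
  have hcauchy : CauchySeq Y := by
    rw [(Valued.hasBasis_uniformity L Zm0).cauchySeq_iff]
    intro γ _
    obtain ⟨N, hN⟩ := Zm0.pow_lt_of_lt_one ht0 ht1 (γ := (MonoidWithZeroHom.ValueGroup₀.embedding γ.1 : Zm0)) ((map_ne_zero _).mpr γ.ne_zero)
    refine ⟨N, fun m hm n hn => ?_⟩
    show v.restrict (Y n - Y m) < γ.1
    rw [Valuation.restrict_lt_iff_lt_embedding]
    rcases le_total m n with hmn | hnm
    · exact lt_of_le_of_lt (le_trans (hdiff' m n hmn) (Zm0.pow_anti ht1.le (by omega)))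
        (hN (N + 1) (by omega))
    · rw [v.map_sub_swap]
      exact lt_of_le_of_lt (le_trans (hdiff' n m hnm) (Zm0.pow_anti ht1.le (by omega)))
        (hN (N + 1) (by omega))
  obtain ⟨a, ha⟩ := cauchySeq_tendsto_of_complete hcauchy
  refine ⟨a, ?_⟩
  have h1 : Tendsto (fun n => Y n ^ ℓ - u) atTop (𝓝 (a ^ ℓ - u)) := (ha.pow ℓ).sub_const u
  have h2 : Tendsto (fun n => Y n ^ ℓ - u) atTop (𝓝 (0 : L)) := by
    rw [(Valued.hasBasis_nhds_zero L Zm0).tendsto_right_iff]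
    intro γ _
    obtain ⟨N, hN⟩ := Zm0.pow_lt_of_lt_one ht0 ht1 (γ := (MonoidWithZeroHom.ValueGroup₀.embedding γ.1 : Zm0)) ((map_ne_zero _).mpr γ.ne_zero)
    filter_upwards [eventually_ge_atTop N] with n hn
    show v.restrict (Y n ^ ℓ - u) < γ.1
    rw [Valuation.restrict_lt_iff_lt_embedding]
    exact lt_of_le_of_lt (inv n).2 (hN (n + 1) (by omega))
  have hfin := tendsto_nhds_unique h1 h2
  rw [sub_eq_zero] at hfin
  exact hfin

end Root

end FKSAux

open FKSAux in
/-- Any field isomorphism between two fields, each complete with respect to a discrete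
valuation, restricts to a ring isomorphism between their valuation rings (i.e. it maps the
valuation ring onto the valuation ring), and it is automatically a homeomorphism for the
valuation topologies. -/
theorem field_iso_of_complete_discrete_valuation_fields
    (K K' : Type*) [Field K] [Field K']
    [hvK : Valued K (WithZero (Multiplicative ℤ))] [CompleteSpace K]
    [hvK' : Valued K' (WithZero (Multiplicative ℤ))] [CompleteSpace K']
    (hK_surj : Function.Surjective hvK.v)
    (hK'_surj : Function.Surjective hvK'.v)
    (φ : K ≃+* K') :
    (∀ x : K, hvK.v x ≤ 1 ↔ hvK'.v (φ x) ≤ 1) ∧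
      Continuous (φ : K → K') ∧ Continuous (φ.symm : K' → K) := by
  classical
  set v : Valuation K Zm0 := hvK.v with hvdef
  set v' : Valuation K' Zm0 := hvK'.v with hv'def
  set w : Valuation K Zm0 := v'.comap (φ : K →+* K') with hwdef
  have hwx : ∀ x : K, w x = v' (φ x) := fun _ => rfl
  have hw_surj : Function.Surjective w := by
    intro γ
    obtain ⟨x', hx'⟩ := hK'_surj γ
    exact ⟨φ.symm x', by rw [hwx, RingEquiv.apply_symm_apply]; exact hx'⟩
  -- Main step : the two valuation rings on K (for v and for w = v' ∘ φ) coincide.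
  have key : ∀ x : K, v x ≤ 1 ↔ w x ≤ 1 := by
    by_cases hvw : ∀ x, v x ≤ 1 → w x ≤ 1
    · exact fun x => ⟨hvw x, le_one_iff_of_imp hw_surj hvw x⟩
    by_cases hwv : ∀ x, w x ≤ 1 → v x ≤ 1
    · exact fun x => ⟨le_one_iff_of_imp hK_surj hwv x, hwv x⟩
    exfalso
    push_neg at hvw hwv
    obtain ⟨x0, hx0v, hx0w⟩ := hvw
    obtain ⟨y0, hy0w, hy0v⟩ := hwv
    have hx00 : x0 ≠ 0 := fun hc => by
      rw [hc, w.map_zero] at hx0w; exact absurd hx0w (by simp)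
    have hy00 : y0 ≠ 0 := fun hc => by
      rw [hc, v.map_zero] at hy0v; exact absurd hy0v (by simp)
    set z := x0 / y0 with hz
    have hz0 : z ≠ 0 := div_ne_zero hx00 hy00
    have hvy0 : v y0 ≠ 0 := v.ne_zero_iff.mpr hy00
    have hwy0 : w y0 ≠ 0 := w.ne_zero_iff.mpr hy00
    have hzv : v z < 1 := by
      rw [hz, map_div₀]
      exact (Zm0.div_lt_one hvy0).mpr (lt_of_le_of_lt hx0v hy0v)
    have hzw : 1 < w z := by
      rw [hz, map_div₀]
      exact (Zm0.one_lt_div hwy0).mpr (lt_of_le_of_lt hy0w hx0w)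
    obtain ⟨az, haz⟩ := Zm0.exists_ofAdd (v.ne_zero_iff.mpr hz0)
    obtain ⟨bz, hbz⟩ := Zm0.exists_ofAdd (w.ne_zero_iff.mpr hz0)
    have haz' : az < 0 := Zm0.coe_lt_one_iff.mp (haz ▸ hzv)
    have hbz' : 0 < bz := Zm0.one_lt_coe_iff.mp (hbz ▸ hzw)
    -- a uniformizer for v
    obtain ⟨π, hπ⟩ := hK_surj ((ofAdd (-1 : ℤ) : Multiplicative ℤ) : Zm0)
    have hπv : v π < 1 := by rw [hπ]; exact Zm0.coe_lt_one_iff.mpr (by omega)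
    have hπ0 : π ≠ 0 := fun hc => by
      rw [hc, v.map_zero] at hπ; exact WithZero.coe_ne_zero hπ.symm
    have hπne1 : π ≠ 1 := fun hc => by
      rw [hc, v.map_one] at hπ
      exact absurd hπ.symm (ne_of_lt (Zm0.coe_lt_one_iff.mpr (by omega)))
    have hc0 : w (π - 1) ≠ 0 := w.ne_zero_iff.mpr (sub_ne_zero.mpr hπne1)
    obtain ⟨mc, hmc⟩ := Zm0.exists_ofAdd hc0
    set n : ℕ := mc.natAbs + 2 with hn
    have hn2' : 2 ≤ n := by rw [hn]; omega
    have hn2 : (2 : ℤ) ≤ (n : ℤ) := by exact_mod_cast hn2'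
    -- z ^ n
    have hvzn : v (z ^ n) = ((ofAdd ((n : ℤ) * az) : Multiplicative ℤ) : Zm0) := by
      rw [map_pow, haz, Zm0.coe_pow]
    have hwzn : w (z ^ n) = ((ofAdd ((n : ℤ) * bz) : Multiplicative ℤ) : Zm0) := by
      rw [map_pow, hbz, Zm0.coe_pow]
    have hmulv : (n : ℤ) * az ≤ -(n : ℤ) := by
      have := mul_le_mul_of_nonneg_left (show az ≤ -1 by omega) (show (0:ℤ) ≤ (n:ℤ) by omega)
      rwa [mul_neg_one] at this
    have hmulw : (n : ℤ) ≤ (n : ℤ) * bz := by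
      have := mul_le_mul_of_nonneg_left (show (1:ℤ) ≤ bz by omega) (show (0:ℤ) ≤ (n:ℤ) by omega)
      rwa [mul_one] at this
    have hvzn_lt : v (z ^ n) < ((ofAdd (-1 : ℤ) : Multiplicative ℤ) : Zm0) := by
      rw [hvzn]
      refine Zm0.coe_lt_coe_iff.mpr ?_
      linarith
    have hvzn_lt1 : v (z ^ n) < 1 := by
      rw [hvzn]
      refine Zm0.coe_lt_one_iff.mpr ?_
      linarith
    have hwzn_gt1 : 1 < w (z ^ n) := by
      rw [hwzn]
      refine Zm0.one_lt_coe_iff.mpr ?_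
      linarith
    -- the element e ≈ 1 for v, ≈ 0 for w
    have hden : w (1 + z ^ n) = w (z ^ n) := by
      have := w.map_add_eq_of_lt_left (x := z ^ n) (y := (1 : K))
        (by rw [w.map_one]; exact hwzn_gt1)
      rwa [add_comm] at this
    have hzn0 : z ^ n ≠ 0 := pow_ne_zero _ hz0
    have hden0 : (1 : K) + z ^ n ≠ 0 := fun hc => by
      rw [hc, w.map_zero] at hden
      exact (w.ne_zero_iff.mpr hzn0) hden.symm
    have hdenv : v (1 + z ^ n) = 1 := v.map_one_add_of_lt hvzn_lt1
    set e : K := (1 + z ^ n)⁻¹ with he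
    have hve : v e = 1 := by rw [he, map_inv₀, hdenv, inv_one]
    have hwe : w e = (w (z ^ n))⁻¹ := by rw [he, map_inv₀, hden]
    set x : K := 1 + (π - 1) * e with hxdef
    have he1 : e - 1 = -(z ^ n) * e := by
      rw [he]
      field_simp
      ring
    have hxπ : x - π = (π - 1) * (e - 1) := by rw [hxdef]; ring
    have hvπ1 : v (π - 1) = 1 := by
      have := v.map_sub_eq_of_lt_right (x := π) (y := (1 : K)) (by rw [v.map_one]; exact hπv)
      rwa [v.map_one] at this
    have hvxπ : v (x - π) = v (z ^ n) := by
      rw [hxπ, he1, v.map_mul, hvπ1, one_mul, v.map_mul, v.map_neg, hve, mul_one]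
    have hvx : v x = v π := by
      have hre : x = π + (x - π) := by ring
      rw [hre]
      exact v.map_add_eq_of_lt_left (by rw [hvxπ, hπ]; exact hvzn_lt)
    have hwx1 : w (x - 1) < 1 := by
      have hre : x - 1 = (π - 1) * e := by rw [hxdef]; ring
      rw [hre, w.map_mul, hwe, hwzn, hmc, ← WithZero.coe_inv, ← ofAdd_neg, ← WithZero.coe_mul,
        ← ofAdd_add, Zm0.coe_lt_one_iff]
      have h1 : mc ≤ (mc.natAbs : ℤ) := Int.le_natAbs
      have h2 : (n : ℤ) = (mc.natAbs : ℤ) + 2 := by rw [hn]; push_cast; ring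
      linarith
    -- move to K' and extract an ℓ-th root
    obtain ⟨ℓ, hℓ2, hℓw⟩ := exists_nat_val_eq_one w
    have hℓv' : v' ((ℓ : ℕ) : K') = 1 := by
      have hcast : ((ℓ : ℕ) : K') = φ ((ℓ : ℕ) : K) := (map_natCast (φ : K →+* K') ℓ).symm
      rw [hcast]
      exact hℓw
    have hu : v' (φ x - 1) < 1 := by
      have hre : φ x - 1 = φ (x - 1) := by rw [map_sub, map_one]
      rw [hre]
      exact hwx1
    obtain ⟨y', hy'⟩ := exists_pow_root hℓ2 hℓv' hu
    have hxpow : x = (φ.symm y') ^ ℓ := by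
      apply φ.injective
      rw [map_pow, RingEquiv.apply_symm_apply]
      exact hy'.symm
    have hx0 : x ≠ 0 := fun hc => by
      rw [hc, v.map_zero] at hvx
      exact (v.ne_zero_iff.mpr hπ0) hvx.symm
    have hsy0 : φ.symm y' ≠ 0 := by
      intro hc
      rw [hc, zero_pow (by omega : ℓ ≠ 0)] at hxpow
      exact hx0 hxpow
    obtain ⟨k, hk⟩ := Zm0.exists_ofAdd (v.ne_zero_iff.mpr hsy0)
    have hcoe : ((ofAdd (-1 : ℤ) : Multiplicative ℤ) : Zm0)
        = ((ofAdd ((ℓ : ℤ) * k) : Multiplicative ℤ) : Zm0) := by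
      rw [← hπ, ← hvx, hxpow, map_pow, hk, Zm0.coe_pow]
    have hlk : k * (ℓ : ℤ) = -1 := by
      have h2 := WithZero.coe_inj.mp hcoe
      simpa using (congrArg Multiplicative.toAdd h2).symm
    have hlk2 : (ℓ : ℤ) * (-k) = 1 := by rw [mul_neg, mul_comm (ℓ : ℤ) k, hlk]; ring
    have hdvd : (ℓ : ℤ) ∣ 1 := ⟨-k, hlk2.symm⟩
    have hle := Int.le_of_dvd one_pos hdvd
    have : (2 : ℤ) ≤ (ℓ : ℤ) := by exact_mod_cast hℓ2
    omega
  -- strict versions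
  have hlt : ∀ x : K, v x < 1 → w x < 1 := by
    intro x hx
    rcases eq_or_ne x 0 with rfl | hx0
    · rw [w.map_zero]; exact zero_lt_one
    · have hwle : w x ≤ 1 := (key x).mp hx.le
      rcases lt_or_eq_of_le hwle with h | h
      · exact h
      · exfalso
        have hinv : w x⁻¹ ≤ 1 := by rw [map_inv₀, h, inv_one]
        have hv1 := (key x⁻¹).mpr hinv
        rw [map_inv₀] at hv1
        obtain ⟨a, ha⟩ := Zm0.exists_ofAdd (v.ne_zero_iff.mpr hx0)
        have ha' : a < 0 := Zm0.coe_lt_one_iff.mp (ha ▸ hx)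
        rw [ha, ← WithZero.coe_inv, ← ofAdd_neg, Zm0.coe_le_one_iff] at hv1
        omega
  have hlt' : ∀ x : K, w x < 1 → v x < 1 := by
    intro x hx
    rcases eq_or_ne x 0 with rfl | hx0
    · rw [v.map_zero]; exact zero_lt_one
    · have hvle : v x ≤ 1 := (key x).mpr hx.le
      rcases lt_or_eq_of_le hvle with h | h
      · exact h
      · exfalso
        have hinv : v x⁻¹ ≤ 1 := by rw [map_inv₀, h, inv_one]
        have hw1 := (key x⁻¹).mp hinv
        rw [map_inv₀] at hw1
        obtain ⟨a, ha⟩ := Zm0.exists_ofAdd (w.ne_zero_iff.mpr hx0)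
        have ha' : a < 0 := Zm0.coe_lt_one_iff.mp (ha ▸ hx)
        rw [ha, ← WithZero.coe_inv, ← ofAdd_neg, Zm0.coe_le_one_iff] at hw1
        omega
  -- strict monotonicity
  have hmono : ∀ a b : K, v a < v b → w a < w b := by
    intro a b hab
    have hb0 : b ≠ 0 := by
      intro hc; rw [hc, v.map_zero] at hab; exact absurd hab not_lt_zero'
    have hvb : v b ≠ 0 := v.ne_zero_iff.mpr hb0
    have hwb : w b ≠ 0 := w.ne_zero_iff.mpr hb0
    have hdiv : v (a / b) < 1 := by rw [map_div₀]; exact (Zm0.div_lt_one hvb).mpr hab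
    have hres := hlt _ hdiv
    rw [map_div₀] at hres
    exact (Zm0.div_lt_one hwb).mp hres
  have hmono' : ∀ a b : K, w a < w b → v a < v b := by
    intro a b hab
    have hb0 : b ≠ 0 := by
      intro hc; rw [hc, w.map_zero] at hab; exact absurd hab not_lt_zero'
    have hvb : v b ≠ 0 := v.ne_zero_iff.mpr hb0
    have hwb : w b ≠ 0 := w.ne_zero_iff.mpr hb0
    have hdiv : w (a / b) < 1 := by rw [map_div₀]; exact (Zm0.div_lt_one hwb).mpr hab
    have hres := hlt' _ hdiv
    rw [map_div₀] at hres
    exact (Zm0.div_lt_one hvb).mp hres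
  -- continuity of φ
  have hcont : Continuous (φ : K → K') := by
    have hca : ContinuousAt (φ : K → K') 0 := by
      rw [ContinuousAt, map_zero]
      rw [(Valued.hasBasis_nhds_zero K Zm0).tendsto_iff (Valued.hasBasis_nhds_zero K' Zm0)]
      intro γ' _
      obtain ⟨b', hb'⟩ := hK'_surj (MonoidWithZeroHom.ValueGroup₀.embedding γ'.1 : Zm0)
      have hb'0 : b' ≠ 0 := fun hc => by
        rw [hc, v'.map_zero] at hb'; exact ((map_ne_zero _).mpr γ'.ne_zero) hb'.symm
      have hsb0 : φ.symm b' ≠ 0 := fun hc => by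
        rw [← RingEquiv.apply_symm_apply φ b', hc, map_zero] at hb'0
        exact hb'0 rfl
      have hvb : v (φ.symm b') ≠ 0 := v.ne_zero_iff.mpr hsb0
      refine ⟨Units.mk0 (v.restrict (φ.symm b'))
        ((Valuation.restrict_pos_iff _ _).mpr (zero_lt_iff.mpr hvb)).ne', trivial, fun y hy => ?_⟩
      have hy0 : v.restrict y < v.restrict (φ.symm b') := hy
      rw [Valuation.restrict_lt_iff] at hy0
      have hres := hmono y (φ.symm b') hy0
      rw [hwx, hwx, RingEquiv.apply_symm_apply, hb'] at hres
      show v'.restrict (φ y) < γ'.1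
      rw [Valuation.restrict_lt_iff_lt_embedding]
      exact hres
    exact continuous_of_continuousAt_zero φ hca
  -- continuity of φ.symm
  have hcont' : Continuous (φ.symm : K' → K) := by
    have hca : ContinuousAt (φ.symm : K' → K) 0 := by
      rw [ContinuousAt, map_zero]
      rw [(Valued.hasBasis_nhds_zero K' Zm0).tendsto_iff (Valued.hasBasis_nhds_zero K Zm0)]
      intro γ _
      obtain ⟨b, hb⟩ := hK_surj (MonoidWithZeroHom.ValueGroup₀.embedding γ.1 : Zm0)
      have hb0 : b ≠ 0 := fun hc => by
        rw [hc, v.map_zero] at hb; exact ((map_ne_zero _).mpr γ.ne_zero) hb.symm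
      have hwb : w b ≠ 0 := w.ne_zero_iff.mpr hb0
      refine ⟨Units.mk0 (v'.restrict (φ b))
        ((Valuation.restrict_pos_iff v' (φ b)).mpr (zero_lt_iff.mpr (hwb : v' (φ b) ≠ 0))).ne', trivial, fun y hy => ?_⟩
      have hy' : w (φ.symm y) < w b := by
        rw [hwx, hwx, RingEquiv.apply_symm_apply]
        have hy0 : v'.restrict y < v'.restrict (φ b) := hy
        rw [Valuation.restrict_lt_iff] at hy0
        exact hy0
      have hres := hmono' (φ.symm y) b hy'
      rw [hb] at hres
      show v.restrict (φ.symm y) < γ.1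
      rw [Valuation.restrict_lt_iff_lt_embedding]
      exact hres
    exact continuous_of_continuousAt_zero φ.symm hca
  exact ⟨fun x => key x, hcont, hcont'⟩
end

section
/- Let R be a reduced commutative ring with finitely many minimal primes Q₁,…,Q_r, and let R' be the integral closure of R in its total ring of fractions. Then R' is isomorphic to the product ∏_{i=1}^r (R/Q_i)', where (R/Q_i)' denotes the integral closure of R/Q_i in its field of fractions. -/
open Polynomial

section Aux

variable {R : Type*} [CommRing R]

lemma eq_zero_of_forall_mem_minimalPrimes [IsReduced R] {x : R}
    (h : ∀ Q ∈ minimalPrimes R, x ∈ Q) : x = 0 := by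
  have hx : x ∈ sInf (minimalPrimes R) := Ideal.mem_sInf.mpr fun {Q} hQ => h Q hQ
  rw [minimalPrimes, Ideal.sInf_minimalPrimes] at hx
  obtain ⟨n, hn⟩ := Ideal.mem_radical_iff.mp hx
  exact IsNilpotent.eq_zero ⟨n, Ideal.mem_bot.mp hn⟩

lemma not_mem_minimalPrimes_of_mem_nonZeroDivisors {s : R}
    (hs : s ∈ nonZeroDivisors R) {Q : Ideal R} (hQ : Q ∈ minimalPrimes R) : s ∉ Q := by
  haveI : Q.IsPrime := hQ.1.1
  intro hsQ
  have hnil : IsNilpotent (algebraMap R (Localization Q.primeCompl) s) :=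
    haveI : Ring.KrullDimLE 0 (Localization Q.primeCompl) := .of_isLocalization Q hQ _
    Ring.KrullDimLE.isNilpotent_iff_mem_maximalIdeal.mpr
      ((IsLocalization.AtPrime.to_map_mem_maximal_iff _ Q s).mpr hsQ)
  obtain ⟨n, hn⟩ := hnil
  rw [← map_pow] at hn
  obtain ⟨⟨c, hc⟩, hcs⟩ := (IsLocalization.map_eq_zero_iff Q.primeCompl _ _).mp hn
  have : c = 0 := (mem_nonZeroDivisors_iff_right.mp (pow_mem hs n)) c hcs
  exact hc (this ▸ Q.zero_mem)

lemma mem_nonZeroDivisors_of_forall_not_mem [IsReduced R] {s : R}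
    (h : ∀ Q ∈ minimalPrimes R, s ∉ Q) : s ∈ nonZeroDivisors R := by
  rw [mem_nonZeroDivisors_iff_right]
  intro t ht
  refine eq_zero_of_forall_mem_minimalPrimes fun Q hQ => ?_
  haveI : Q.IsPrime := hQ.1.1
  rcases Ideal.IsPrime.mem_or_mem ‹Q.IsPrime› (show t * s ∈ Q by rw [ht]; exact Q.zero_mem) with h1 | h1
  · exact h1
  · exact absurd h1 (h Q hQ)

end Aux

set_option maxHeartbeats 2000000 in
/-- Let `R` be a reduced commutative ring with finitely many minimal primes
`Q₁, …, Q_r`, and let `R'` be the integral closure of `R` in its total ring of fractions.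
Then `R'` is isomorphic to the product `∏ᵢ (R/Qᵢ)'`, where `(R/Qᵢ)'` denotes the integral
closure of `R/Qᵢ` in its field of fractions. -/
theorem integralClosure_iso_prod_of_reduced
    (R : Type*) [CommRing R] [IsReduced R]
    [Finite {Q : Ideal R // Q ∈ minimalPrimes R}] :
    Nonempty ((integralClosure R (FractionRing R)) ≃+*
      ((Q : {Q : Ideal R // Q ∈ minimalPrimes R}) →
        integralClosure (R ⧸ Q.1) (FractionRing (R ⧸ Q.1)))) := by
  classical
  letI ι := {Q : Ideal R // Q ∈ minimalPrimes R}
  haveI : Fintype ι := Fintype.ofFinite ι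
  haveI hprime : ∀ i : ι, i.1.IsPrime := fun i => i.2.1.1
  letI L : ι → Type _ := fun i => FractionRing (R ⧸ i.1)
  letI g : ∀ i : ι, R →+* L i :=
    fun i => (algebraMap (R ⧸ i.1) (L i)).comp (Ideal.Quotient.mk i.1)
  letI f : R →+* ∀ i, L i := Pi.ringHom g
  have hg0 : ∀ (i : ι) (x : R), g i x = 0 ↔ x ∈ i.1 := by
    intro i x
    rw [RingHom.comp_apply, ← (algebraMap (R ⧸ i.1) (L i)).map_zero]
    rw [(IsFractionRing.injective (R ⧸ i.1) (L i)).eq_iff]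
    exact Ideal.Quotient.eq_zero_iff_mem
  -- injectivity
  have hker : ∀ x : R, f x = 0 → x = 0 := by
    intro x hx
    refine eq_zero_of_forall_mem_minimalPrimes fun Q hQ => ?_
    exact (hg0 ⟨Q, hQ⟩ x).mp (congrFun hx ⟨Q, hQ⟩)
  have hfinj : Function.Injective f := by
    intro a b hab
    have : a - b = 0 := hker _ (by rw [map_sub, hab, sub_self])
    exact sub_eq_zero.mp this
  -- units
  have hunit : ∀ s : nonZeroDivisors R, IsUnit (f s) := by
    intro s
    rw [isUnit_iff_exists_inv]
    have hne : ∀ i : ι, g i s ≠ 0 := fun i hi =>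
      not_mem_minimalPrimes_of_mem_nonZeroDivisors s.2 i.2 ((hg0 i s).mp hi)
    exact ⟨fun i => (g i s)⁻¹, funext fun i => mul_inv_cancel₀ (hne i)⟩
  -- the quasi-idempotents
  have he : ∀ i : ι, ∃ e : R, (∀ j : ι, j ≠ i → e ∈ j.1) ∧ e ∉ i.1 := by
    intro i
    have hnle : ¬ ((Finset.univ.erase i).inf (fun j : ι => j.1) ≤ i.1) := by
      intro hle
      obtain ⟨j, hj, hji⟩ := (Ideal.IsPrime.inf_le' (hprime i)).mp hle
      have hij : i.1 ≤ j.1 := i.2.2 ⟨hprime j, bot_le⟩ hji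
      exact (Finset.mem_erase.mp hj).1 (Subtype.ext (le_antisymm hji hij))
    obtain ⟨e, he1, he2⟩ := SetLike.not_le_iff_exists.mp hnle
    exact ⟨e, fun j hj =>
      (Finset.inf_le (Finset.mem_erase.mpr ⟨hj, Finset.mem_univ j⟩) : _ ≤ j.1) he1, he2⟩
  choose e he1 he2 using he
  -- surjectivity
  have hsurj : ∀ z : ∀ i, L i, ∃ x : R × nonZeroDivisors R, z * f x.2 = f x.1 := by
    intro z
    have hz : ∀ i : ι, ∃ a b : R, (Ideal.Quotient.mk i.1 b) ≠ 0 ∧ z i * g i b = g i a := by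
      intro i
      obtain ⟨⟨a', b'⟩, hab⟩ := IsLocalization.surj (nonZeroDivisors (R ⧸ i.1)) (z i)
      obtain ⟨a, rfl⟩ := Ideal.Quotient.mk_surjective a'
      obtain ⟨b, hb⟩ := Ideal.Quotient.mk_surjective (b' : R ⧸ i.1)
      refine ⟨a, b, ?_, ?_⟩
      · rw [hb]; exact nonZeroDivisors.ne_zero b'.2
      · simpa [g, RingHom.comp_apply, hb] using hab
    choose α β hβ hzeq using hz
    have hmk : ∀ (c : ι → R) (i : ι),
        Ideal.Quotient.mk i.1 (∑ j, e j * c j) = Ideal.Quotient.mk i.1 (e i * c i) := by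
      intro c i
      rw [map_sum, Finset.sum_eq_single i]
      · intro j _ hji
        rw [map_mul, Ideal.Quotient.eq_zero_iff_mem.mpr (he1 j i hji.symm), zero_mul]
      · exact fun h => absurd (Finset.mem_univ i) h
    have hgsum : ∀ (c : ι → R) (i : ι), g i (∑ j, e j * c j) = g i (e i * c i) := by
      intro c i
      simp only [g, RingHom.comp_apply, hmk c i]
    set s : R := ∑ j, e j * β j with hs
    have hsmem : s ∈ nonZeroDivisors R := by
      refine mem_nonZeroDivisors_of_forall_not_mem fun Q hQ hsQ => ?_
      have h0 : Ideal.Quotient.mk Q s = 0 := Ideal.Quotient.eq_zero_iff_mem.mpr hsQ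
      rw [hmk β ⟨Q, hQ⟩, map_mul] at h0
      haveI := hprime ⟨Q, hQ⟩
      rcases mul_eq_zero.mp h0 with h1 | h1
      · exact he2 ⟨Q, hQ⟩ (Ideal.Quotient.eq_zero_iff_mem.mp h1)
      · exact hβ ⟨Q, hQ⟩ h1
    refine ⟨⟨∑ j, e j * α j, ⟨s, hsmem⟩⟩, funext fun i => ?_⟩
    show z i * f s i = f (∑ j, e j * α j) i
    have h1 : f s i = g i (e i * β i) := hgsum β i
    have h2 : f (∑ j, e j * α j) i = g i (e i * α i) := hgsum α i
    rw [h1, h2, map_mul, map_mul, ← mul_assoc, mul_comm (z i) (g i (e i)), mul_assoc,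
      hzeq i]
  letI : Algebra R (∀ i, L i) := f.toAlgebra
  haveI hloc : IsLocalization (nonZeroDivisors R) (∀ i, L i) :=
    { map_units := hunit
      surj := hsurj
      exists_of_eq := fun {x y} h => ⟨1, by simpa using hfinj h⟩ }
  haveI : IsScalarTower R R (∀ i, L i) := IsScalarTower.left R
  let ψ : FractionRing R ≃ₐ[R] ∀ i, L i :=
    IsLocalization.algEquiv (nonZeroDivisors R) (FractionRing R) (∀ i, L i)
  -- first equivalence: transport integral closure along ψ
  have hψ : ∀ (x : FractionRing R), IsIntegral R x → IsIntegral R (ψ x) := by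
    rintro x ⟨p, pm, hp⟩
    refine ⟨p, pm, ?_⟩
    have h := Polynomial.hom_eval₂ p (algebraMap R (FractionRing R))
      (ψ : FractionRing R →+* ∀ i, L i) x
    rw [hp, map_zero] at h
    have hcomp2 : ((ψ : FractionRing R →+* ∀ i, L i)).comp
        (algebraMap R (FractionRing R)) = algebraMap R (∀ i, L i) :=
      RingHom.ext fun r => ψ.commutes r
    rw [hcomp2] at h; exact h.symm
  have hψs : ∀ (x : ∀ i, L i), IsIntegral R x → IsIntegral R (ψ.symm x) := by
    rintro x ⟨p, pm, hp⟩
    refine ⟨p, pm, ?_⟩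
    have h := Polynomial.hom_eval₂ p (algebraMap R (∀ i, L i))
      (ψ.symm : (∀ i, L i) →+* FractionRing R) x
    rw [hp, map_zero] at h
    have hcomp2 : ((ψ.symm : (∀ i, L i) →+* FractionRing R)).comp
        (algebraMap R (∀ i, L i)) = algebraMap R (FractionRing R) :=
      RingHom.ext fun r => ψ.symm.commutes r
    rw [hcomp2] at h; exact h.symm
  let E1 : (integralClosure R (FractionRing R)) ≃+* (integralClosure R (∀ i, L i)) :=
    { toFun := fun x => ⟨ψ x.1, hψ x.1 x.2⟩
      invFun := fun x => ⟨ψ.symm x.1, hψs x.1 x.2⟩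
      left_inv := fun x => Subtype.ext (ψ.symm_apply_apply x.1)
      right_inv := fun x => Subtype.ext (ψ.apply_symm_apply x.1)
      map_mul' := fun x y => Subtype.ext (map_mul ψ x.1 y.1)
      map_add' := fun x y => Subtype.ext (map_add ψ x.1 y.1) }
  -- key computation : components of polynomial evaluation
  have hcomp : ∀ (i : ι), (Pi.evalRingHom L i).comp f = g i := fun i => rfl
  have heval : ∀ (p : R[X]) (x : ∀ i, L i) (i : ι),
      (p.eval₂ f x) i = p.eval₂ (g i) (x i) := by
    intro p x i
    have := Polynomial.hom_eval₂ p f (Pi.evalRingHom L i) x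
    rw [hcomp] at this
    exact this
  have halg : algebraMap R (∀ i, L i) = f := rfl
  -- forward: components of integral elements are integral
  have hfwd : ∀ (x : ∀ i, L i), IsIntegral R x → ∀ i : ι,
      (algebraMap (R ⧸ i.1) (L i)).IsIntegralElem (x i) := by
    rintro x ⟨p, pm, hp⟩ i
    refine ⟨p.map (Ideal.Quotient.mk i.1), pm.map _, ?_⟩
    rw [Polynomial.eval₂_map]
    rw [halg] at hp
    have := heval p x i
    rw [hp] at this
    exact (this.symm.trans rfl).symm ▸ rfl
  -- single-coordinate integral elements
  have hsingle : ∀ (i : ι) (w : L i),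
      (algebraMap (R ⧸ i.1) (L i)).IsIntegralElem w →
      IsIntegral R (Pi.single i w : ∀ j, L j) := by
    rintro i w ⟨p, pm, hp⟩
    have hlift : p ∈ Polynomial.lifts (Ideal.Quotient.mk i.1) :=
      (Polynomial.mem_lifts p).mpr
        ((Polynomial.map_surjective _ Ideal.Quotient.mk_surjective) p)
    obtain ⟨q, hq, -, hqm⟩ := Polynomial.lifts_and_degree_eq_and_monic hlift pm
    refine ⟨q * Polynomial.X, hqm.mul Polynomial.monic_X, ?_⟩
    rw [halg]
    funext j
    simp only [Pi.zero_apply]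
    rw [heval, Polynomial.eval₂_mul, Polynomial.eval₂_X]
    by_cases hji : j = i
    · subst hji
      rw [Pi.single_eq_same]
      have h2 : q.eval₂ (g j) w = p.eval₂ (algebraMap (R ⧸ j.1) (L j)) w := by
        rw [← hq, Polynomial.eval₂_map]
      rw [h2, hp, zero_mul]
    · rw [Pi.single_eq_of_ne hji, mul_zero]
  have hbwd : ∀ (y : ∀ i : ι, integralClosure (R ⧸ i.1) (L i)),
      IsIntegral R ((fun i => (y i : L i)) : ∀ i, L i) := by
    intro y
    have hy : ((fun i => (y i : L i)) : ∀ i, L i) = ∑ i : ι, Pi.single i (y i : L i) :=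
      (Finset.univ_sum_single _).symm
    rw [hy]
    exact Subalgebra.sum_mem (integralClosure R (∀ i, L i))
      fun i _ => hsingle i _ (y i).2
  let E2 : (integralClosure R (∀ i, L i)) ≃+*
      (∀ i : ι, integralClosure (R ⧸ i.1) (L i)) :=
    { toFun := fun x i => ⟨x.1 i, hfwd x.1 x.2 i⟩
      invFun := fun y => ⟨fun i => (y i : L i), hbwd y⟩
      left_inv := fun x => Subtype.ext rfl
      right_inv := fun y => funext fun i => Subtype.ext rfl
      map_mul' := fun x y => funext fun i => Subtype.ext rfl
      map_add' := fun x y => funext fun i => Subtype.ext rfl }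
  exact ⟨E1.trans E2⟩
end

section
/- Let k be a field. The localization k[[s,t]][t⁻¹] of the formal power series ring in two variables obtained by inverting t is a principal ideal domain. -/
set_option maxHeartbeats 1000000
set_option synthInstance.maxHeartbeats 400000

open PowerSeries Finset

namespace WPrep

variable {k : Type*} [CommRing k]

noncomputable def fs (i j : ℕ) : Fin 2 →₀ ℕ := Finsupp.single 0 i + Finsupp.single 1 j

@[simp] lemma fs_apply_zero (i j : ℕ) : fs i j 0 = i := by
  simp [fs, Finsupp.single_apply]

@[simp] lemma fs_apply_one (i j : ℕ) : fs i j 1 = j := by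
  simp [fs, Finsupp.single_apply]

lemma fs_decomp (d : Fin 2 →₀ ℕ) : d = fs (d 0) (d 1) := by
  ext x
  fin_cases x <;> simp

lemma fs_add (i₁ j₁ i₂ j₂ : ℕ) : fs i₁ j₁ + fs i₂ j₂ = fs (i₁ + i₂) (j₁ + j₂) := by
  ext x
  fin_cases x <;> simp

/-- The coefficient-reindexing equivalence between two-variable power series and iterated
power series, with variable `1` becoming the outer variable. -/
noncomputable def T : MvPowerSeries (Fin 2) k ≃+* PowerSeries (PowerSeries k) where
  toFun f := PowerSeries.mk fun j => PowerSeries.mk fun i => MvPowerSeries.coeff (R := k) (fs i j) f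
  invFun g := fun d => PowerSeries.coeff (R := k) (d 0) (PowerSeries.coeff (R := PowerSeries k) (d 1) g)
  left_inv f := by
    ext d
    rw [MvPowerSeries.coeff_apply]
    erw [MvPowerSeries.coeff_apply]
    show PowerSeries.coeff (R := k) (d 0) (PowerSeries.coeff (R := PowerSeries k) (d 1) _) = _
    rw [PowerSeries.coeff_mk, PowerSeries.coeff_mk]
    exact congrArg (fun e => MvPowerSeries.coeff (R := k) e f) (fs_decomp d).symm
  right_inv g := by
    ext j i
    rw [PowerSeries.coeff_mk, PowerSeries.coeff_mk]
    show PowerSeries.coeff (R := k) ((fs i j) 0) (PowerSeries.coeff (R := PowerSeries k) ((fs i j) 1) g) = _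
    rw [fs_apply_zero, fs_apply_one]
  map_mul' f g := by
    ext j i
    simp only [PowerSeries.coeff_mk]
    rw [MvPowerSeries.coeff_mul, PowerSeries.coeff_mul, map_sum]
    simp only [PowerSeries.coeff_mul, PowerSeries.coeff_mk]
    rw [← Finset.sum_product']
    refine Finset.sum_nbij' (fun p => ((p.1 1, p.2 1), (p.1 0, p.2 0)))
      (fun x => (fs x.2.1 x.1.1, fs x.2.2 x.1.2)) ?_ ?_ ?_ ?_ ?_
    · rintro ⟨a, b⟩ ha
      rw [Finset.HasAntidiagonal.mem_antidiagonal] at ha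
      rw [Finset.mem_product, Finset.HasAntidiagonal.mem_antidiagonal, Finset.HasAntidiagonal.mem_antidiagonal]
      constructor
      · show a 1 + b 1 = j
        rw [← Finsupp.add_apply, ha, fs_apply_one]
      · show a 0 + b 0 = i
        rw [← Finsupp.add_apply, ha, fs_apply_zero]
    · rintro ⟨⟨j₁, j₂⟩, ⟨i₁, i₂⟩⟩ hx
      rw [Finset.mem_product, Finset.HasAntidiagonal.mem_antidiagonal, Finset.HasAntidiagonal.mem_antidiagonal] at hx
      rw [Finset.HasAntidiagonal.mem_antidiagonal]
      show fs i₁ j₁ + fs i₂ j₂ = fs i j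
      rw [fs_add, hx.1, hx.2]
    · rintro ⟨a, b⟩ _
      show (fs (a 0) (a 1), fs (b 0) (b 1)) = (a, b)
      rw [← fs_decomp, ← fs_decomp]
    · rintro ⟨⟨j₁, j₂⟩, ⟨i₁, i₂⟩⟩ _
      show (((fs i₁ j₁) 1, (fs i₂ j₂) 1), ((fs i₁ j₁) 0, (fs i₂ j₂) 0)) = _
      simp
    · rintro ⟨a, b⟩ _
      show MvPowerSeries.coeff (R := k) a f * MvPowerSeries.coeff (R := k) b g
          = MvPowerSeries.coeff (R := k) (fs (a 0) (a 1)) f * MvPowerSeries.coeff (R := k) (fs (b 0) (b 1)) g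
      rw [← fs_decomp, ← fs_decomp]
  map_add' f g := by
    ext j i
    simp

lemma fs_eq_single : ∀ i j : ℕ, fs i j = Finsupp.single (1 : Fin 2) 1 ↔ i = 0 ∧ j = 1 := by
  intro i j
  constructor
  · intro h
    have h0 := congrArg (fun d : Fin 2 →₀ ℕ => d 0) h
    have h1 := congrArg (fun d : Fin 2 →₀ ℕ => d 1) h
    simp [Finsupp.single_apply] at h0 h1
    exact ⟨h0, h1⟩
  · rintro ⟨rfl, rfl⟩
    ext x
    fin_cases x <;> simp [Finsupp.single_apply]

lemma T_X_one : (T : MvPowerSeries (Fin 2) k ≃+* PowerSeries (PowerSeries k))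
    (MvPowerSeries.X 1) = PowerSeries.X := by
  have : ∀ j i : ℕ, PowerSeries.coeff (R := k) i (PowerSeries.coeff (R := PowerSeries k) j
      ((T : MvPowerSeries (Fin 2) k ≃+* PowerSeries (PowerSeries k)) (MvPowerSeries.X 1)))
      = PowerSeries.coeff (R := k) i (PowerSeries.coeff (R := PowerSeries k) j (PowerSeries.X)) := by
    intro j i
    show PowerSeries.coeff (R := k) i (PowerSeries.coeff (R := PowerSeries k) j
      (PowerSeries.mk fun j => PowerSeries.mk fun i =>
        MvPowerSeries.coeff (R := k) (fs i j) (MvPowerSeries.X 1))) = _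
    rw [PowerSeries.coeff_mk, PowerSeries.coeff_mk, MvPowerSeries.coeff_X]
    by_cases hj : j = 1 <;> by_cases hi : i = 0 <;>
      simp [PowerSeries.coeff_X, PowerSeries.coeff_one, hj, hi, fs_eq_single]
  ext j i
  exact this j i


variable {k : Type*} [Field k]


/-- `c` divided by `X^r` (discarding the remainder). -/
noncomputable def divr (r : ℕ) (c : k⟦X⟧) : k⟦X⟧ :=
  PowerSeries.mk fun j => PowerSeries.coeff (R := k) (j + r) c

/-- the remainder of `c` upon division by `X^r`: a polynomial of degree `< r`. -/
noncomputable def truncr (r : ℕ) (c : k⟦X⟧) : k⟦X⟧ := c - (X : k⟦X⟧) ^ r * divr r c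

lemma truncr_spec (r : ℕ) (c : k⟦X⟧) : (X : k⟦X⟧) ^ r * divr r c + truncr r c = c := by
  rw [truncr]; ring

lemma coeff_truncr (r : ℕ) (c : k⟦X⟧) {j : ℕ} (h : r ≤ j) :
    PowerSeries.coeff (R := k) j (truncr r c) = 0 := by
  obtain ⟨d, rfl⟩ := Nat.exists_eq_add_of_le h
  rw [truncr, map_sub, add_comm r d, PowerSeries.coeff_X_pow_mul, divr,
    PowerSeries.coeff_mk, sub_eq_zero]

variable (g h : PowerSeries (PowerSeries k)) (r : ℕ) (e : (PowerSeries k)ˣ)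

/-- The sequence of outer coefficients of the quotient in Weierstrass division. -/
noncomputable def Qseq : ℕ → k⟦X⟧ := fun n =>
  (↑e⁻¹ : k⟦X⟧) * divr r (PowerSeries.coeff (R := PowerSeries k) n h -
    ∑ i ∈ (Finset.range n).attach,
      Qseq i.1 * PowerSeries.coeff (R := PowerSeries k) (n - i.1) g)
termination_by n => n
decreasing_by exact Finset.mem_range.mp i.2

lemma Qseq_eq (n : ℕ) : Qseq g h r e n =
    (↑e⁻¹ : k⟦X⟧) * divr r (PowerSeries.coeff (R := PowerSeries k) n h -
      ∑ i ∈ Finset.range n,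
        Qseq g h r e i * PowerSeries.coeff (R := PowerSeries k) (n - i) g) := by
  rw [Qseq, ← Finset.sum_attach (Finset.range n)
    (fun i => Qseq g h r e i * PowerSeries.coeff (R := PowerSeries k) (n - i) g)]

/-- Weierstrass division in `k⟦X⟧⟦X⟧`, where the divisor has constant (outer) coefficient
`X^r·e` with `e` a unit: the remainder has all its outer coefficients of inner degree `< r`. -/
theorem weierstrass_division
    (hg : PowerSeries.constantCoeff (R := PowerSeries k) g = (X : k⟦X⟧) ^ r * e) :
    ∃ q ρ : PowerSeries (PowerSeries k), h = q * g + ρ ∧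
      ∀ n j, r ≤ j → PowerSeries.coeff (R := k) j (PowerSeries.coeff (R := PowerSeries k) n ρ) = 0 := by
  set q : PowerSeries (PowerSeries k) := PowerSeries.mk (Qseq g h r e) with hq
  refine ⟨q, h - q * g, by ring, ?_⟩
  intro n j hj
  set c : k⟦X⟧ := PowerSeries.coeff (R := PowerSeries k) n h -
      ∑ i ∈ Finset.range n,
        Qseq g h r e i * PowerSeries.coeff (R := PowerSeries k) (n - i) g with hc
  have hqg : PowerSeries.coeff (R := PowerSeries k) n (q * g)
      = (∑ i ∈ Finset.range n,
          Qseq g h r e i * PowerSeries.coeff (R := PowerSeries k) (n - i) g)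
        + Qseq g h r e n * ((X : k⟦X⟧) ^ r * e) := by
    rw [PowerSeries.coeff_mul, Finset.Nat.sum_antidiagonal_eq_sum_range_succ_mk,
      Finset.sum_range_succ]
    simp only [hq, PowerSeries.coeff_mk]
    rw [Nat.sub_self, PowerSeries.coeff_zero_eq_constantCoeff, hg]
  have key : PowerSeries.coeff (R := PowerSeries k) n (h - q * g) = truncr r c := by
    rw [map_sub, hqg, Qseq_eq, ← hc]
    have : (↑e⁻¹ : k⟦X⟧) * divr r c * ((X : k⟦X⟧) ^ r * e)
        = (X : k⟦X⟧) ^ r * divr r c := by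
      have he : (↑e⁻¹ : k⟦X⟧) * (↑e : k⟦X⟧) = 1 := by
        rw [← Units.val_mul, inv_mul_cancel, Units.val_one]
      calc (↑e⁻¹ : k⟦X⟧) * divr r c * ((X : k⟦X⟧) ^ r * e)
          = ((↑e⁻¹ : k⟦X⟧) * ↑e) * ((X : k⟦X⟧) ^ r * divr r c) := by ring
        _ = (X : k⟦X⟧) ^ r * divr r c := by rw [he, one_mul]
    rw [this, truncr, hc]
    ring
  rw [key, coeff_truncr r c hj]


lemma constantCoeff_divided_ne_zero {R : Type*} [CommRing R] {c : R⟦X⟧} (hc : c ≠ 0) :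
    PowerSeries.constantCoeff (R := R) (divXPowOrder c) ≠ 0 := by
  set d := c.order.toNat with hd
  have h1 := (X_pow_order_mul_divXPowOrder (f := c))
  have h2 : PowerSeries.coeff (R := R) d c ≠ 0 := coeff_order hc
  intro h0
  apply h2
  calc PowerSeries.coeff (R := R) d c
      = PowerSeries.coeff (R := R) (0 + d) ((X : R⟦X⟧) ^ d * divXPowOrder c) := by
        rw [zero_add, hd, h1]
    _ = PowerSeries.coeff (R := R) 0 (divXPowOrder c) := PowerSeries.coeff_X_pow_mul _ _ _
    _ = 0 := by rw [PowerSeries.coeff_zero_eq_constantCoeff, h0]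

/-- Weierstrass preparation (in the form needed here): a power series over `k⟦X⟧` whose
constant coefficient is nonzero is a unit times `C (X^m) - ρ` where `ρ` has all outer
coefficients of inner degree `< m`. -/
theorem weierstrass_preparation (g : PowerSeries (PowerSeries k))
    (hg0 : PowerSeries.constantCoeff (R := PowerSeries k) g ≠ 0) :
    ∃ (u : (PowerSeries (PowerSeries k))ˣ) (m : ℕ) (ρ : PowerSeries (PowerSeries k)),
      (∀ n j, m ≤ j → PowerSeries.coeff (R := k) j (PowerSeries.coeff (R := PowerSeries k) n ρ) = 0) ∧
      g = ↑u * (PowerSeries.C (R := PowerSeries k) ((X : k⟦X⟧) ^ m) - ρ) := by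
  set c : k⟦X⟧ := PowerSeries.constantCoeff (R := PowerSeries k) g with hcdef
  set m := c.order.toNat with hm
  have hunit : IsUnit (divXPowOrder c) :=
    PowerSeries.isUnit_iff_constantCoeff.mpr
      (isUnit_iff_ne_zero.mpr (constantCoeff_divided_ne_zero hg0))
  set e : (k⟦X⟧)ˣ := hunit.unit with he
  have hg : PowerSeries.constantCoeff (R := PowerSeries k) g = (X : k⟦X⟧) ^ m * ↑e := by
    rw [IsUnit.unit_spec]
    exact (X_pow_order_mul_divXPowOrder (f := c)).symm
  obtain ⟨q, ρ, hdiv, hρ⟩ := weierstrass_division g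
    (PowerSeries.C (R := PowerSeries k) ((X : k⟦X⟧) ^ m)) m e hg
  -- `q` is a unit
  have hq0 : PowerSeries.constantCoeff (R := PowerSeries k) q * ((X : k⟦X⟧) ^ m * ↑e)
      + PowerSeries.constantCoeff (R := PowerSeries k) ρ = (X : k⟦X⟧) ^ m := by
    have := congrArg (PowerSeries.constantCoeff (R := PowerSeries k)) hdiv
    rw [map_add, map_mul, hg, PowerSeries.constantCoeff_C] at this
    exact this.symm
  have hfac : (X : k⟦X⟧) ^ m * (1 - PowerSeries.constantCoeff (R := PowerSeries k) q * ↑e)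
      = PowerSeries.constantCoeff (R := PowerSeries k) ρ := by
    linear_combination -hq0
  have hone : PowerSeries.constantCoeff (R := PowerSeries k) q * ↑e = 1 := by
    have hz : (1 : k⟦X⟧) - PowerSeries.constantCoeff (R := PowerSeries k) q * ↑e = 0 := by
      apply PowerSeries.ext
      intro j
      have h3 := congrArg (PowerSeries.coeff (R := k) (j + m)) hfac
      rw [PowerSeries.coeff_X_pow_mul] at h3
      rw [map_zero, h3]
      have h4 := hρ 0 (j + m) (Nat.le_add_left m j)
      rwa [PowerSeries.coeff_zero_eq_constantCoeff_apply] at h4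
    rw [sub_eq_zero] at hz
    exact hz.symm
  have hqunit : IsUnit q :=
    PowerSeries.isUnit_iff_constantCoeff.mpr
      (IsUnit.of_mul_eq_one _ hone)
  obtain ⟨uq, huq⟩ := hqunit
  refine ⟨uq⁻¹, m, ρ, hρ, ?_⟩
  have hqg : q * g = PowerSeries.C (R := PowerSeries k) ((X : k⟦X⟧) ^ m) - ρ := by
    rw [hdiv]; ring
  calc g = ↑uq⁻¹ * (q * g) := by
        rw [← mul_assoc, ← huq, Units.inv_mul, one_mul]
    _ = ↑uq⁻¹ * (PowerSeries.C (R := PowerSeries k) ((X : k⟦X⟧) ^ m) - ρ) := by rw [hqg]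

variable (k) in
/-- The coefficient-wise map `k⟦X⟧ → S' = (k⟦X⟧⟦X⟧)[1/X]`. -/
noncomputable def g0 : k⟦X⟧ →+* Localization.Away (PowerSeries.X : PowerSeries (PowerSeries k)) :=
  (algebraMap (PowerSeries (PowerSeries k)) _).comp (PowerSeries.map (PowerSeries.C (R := k)))

lemma isUnit_algebraMap_X :
    IsUnit (algebraMap (PowerSeries (PowerSeries k))
      (Localization.Away (PowerSeries.X : PowerSeries (PowerSeries k))) PowerSeries.X) :=
  IsLocalization.map_units _ ⟨PowerSeries.X, Submonoid.mem_powers _⟩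

lemma isUnit_g0 {c : k⟦X⟧} (hc : c ≠ 0) : IsUnit (g0 k c) := by
  have h1 := (X_pow_order_mul_divXPowOrder (f := c))
  set d := c.order.toNat with hd
  have h2 : IsUnit (divXPowOrder c) :=
    PowerSeries.isUnit_iff_constantCoeff.mpr
      (isUnit_iff_ne_zero.mpr (constantCoeff_divided_ne_zero hc))
  rw [← h1, map_mul, map_pow]
  refine IsUnit.mul (IsUnit.pow _ ?_) (h2.map _)
  show IsUnit (g0 k PowerSeries.X)
  rw [g0, RingHom.comp_apply, PowerSeries.map_X]
  exact isUnit_algebraMap_X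

variable (k) in
/-- The map `Frac(k⟦X⟧) → S'`. -/
noncomputable def Lmap :
    FractionRing (PowerSeries k) →+* Localization.Away (PowerSeries.X : PowerSeries (PowerSeries k)) :=
  IsLocalization.lift (M := nonZeroDivisors (PowerSeries k))
    (fun y => isUnit_g0 (mem_nonZeroDivisors_iff_ne_zero.mp y.2))

lemma Lmap_eq (c : k⟦X⟧) :
    Lmap k (algebraMap (PowerSeries k) (FractionRing (PowerSeries k)) c) = g0 k c :=
  IsLocalization.lift_eq _ _

variable (k) in
/-- image of the inner variable `s` in `S'`. -/
noncomputable def sElt : Localization.Away (PowerSeries.X : PowerSeries (PowerSeries k)) :=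
  algebraMap (PowerSeries (PowerSeries k)) _ (PowerSeries.C (R := PowerSeries k) PowerSeries.X)

variable (k) in
/-- Evaluation of polynomials over `Frac(k⟦X⟧)` in `S'` at the inner variable. -/
noncomputable def phi :
    Polynomial (FractionRing (PowerSeries k)) →+*
      Localization.Away (PowerSeries.X : PowerSeries (PowerSeries k)) :=
  Polynomial.eval₂RingHom (Lmap k) (sElt k)

/-- Rearranging a remainder with outer coefficients of inner degree `< m` as a polynomial
in the inner variable. -/
lemma rho_eq_sum (ρ : PowerSeries (PowerSeries k)) (m : ℕ)
    (hρ : ∀ n j, m ≤ j → PowerSeries.coeff (R := k) j (PowerSeries.coeff (R := PowerSeries k) n ρ) = 0) :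
    ρ = ∑ i ∈ Finset.range m,
      (PowerSeries.map (PowerSeries.C (R := k))
          (PowerSeries.mk fun n => PowerSeries.coeff (R := k) i (PowerSeries.coeff (R := PowerSeries k) n ρ)))
        * PowerSeries.C (R := PowerSeries k) ((PowerSeries.X : k⟦X⟧) ^ i) := by
  apply PowerSeries.ext
  intro n
  rw [map_sum]
  have hterm : ∀ i, PowerSeries.coeff (R := PowerSeries k) n
      ((PowerSeries.map (PowerSeries.C (R := k))
          (PowerSeries.mk fun n => PowerSeries.coeff (R := k) i (PowerSeries.coeff (R := PowerSeries k) n ρ)))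
        * PowerSeries.C (R := PowerSeries k) ((PowerSeries.X : k⟦X⟧) ^ i))
      = PowerSeries.C (R := k) (PowerSeries.coeff (R := k) i (PowerSeries.coeff (R := PowerSeries k) n ρ))
          * (PowerSeries.X : k⟦X⟧) ^ i := by
    intro i
    rw [PowerSeries.coeff_mul_C, PowerSeries.coeff_map, PowerSeries.coeff_mk]
  rw [Finset.sum_congr rfl fun i _ => hterm i]
  apply PowerSeries.ext
  intro j
  rw [map_sum]
  by_cases hj : j < m
  · rw [Finset.sum_eq_single j
      (fun i _ hne => by rw [PowerSeries.coeff_C_mul_X_pow]; simp [Ne.symm hne])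
      (fun h => absurd (Finset.mem_range.mpr hj) h)]
    rw [PowerSeries.coeff_C_mul_X_pow]
    simp
  · rw [hρ n j (le_of_not_gt hj), Finset.sum_eq_zero]
    intro i hi
    rw [PowerSeries.coeff_C_mul_X_pow]
    have : j ≠ i := fun h => hj (h ▸ Finset.mem_range.mp hi)
    simp [this]
lemma phi_X : phi k (Polynomial.X) = sElt k := Polynomial.eval₂_X _ _

lemma phi_C (a : FractionRing (PowerSeries k)) : phi k (Polynomial.C a) = Lmap k a :=
  Polynomial.eval₂_C _ _

lemma sElt_pow (i : ℕ) : (sElt k) ^ i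
    = algebraMap (PowerSeries (PowerSeries k)) _
        (PowerSeries.C (R := PowerSeries k) ((PowerSeries.X : k⟦X⟧) ^ i)) := by
  rw [sElt, ← map_pow, ← map_pow]

/-- Every nonzero element of `S'` is a unit times the image of a polynomial over the
Laurent series field. -/
theorem exists_unit_mul_phi
    (f : Localization.Away (PowerSeries.X : PowerSeries (PowerSeries k))) (hf : f ≠ 0) :
    ∃ (u : (Localization.Away (PowerSeries.X : PowerSeries (PowerSeries k)))ˣ)
      (p : Polynomial (FractionRing (PowerSeries k))), f = ↑u * phi k p := by
  obtain ⟨⟨g, y⟩, hsurj⟩ :=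
    IsLocalization.surj (Submonoid.powers (PowerSeries.X : PowerSeries (PowerSeries k))) f
  have hyu : IsUnit (algebraMap (PowerSeries (PowerSeries k))
      (Localization.Away (PowerSeries.X : PowerSeries (PowerSeries k)))
      (y : PowerSeries (PowerSeries k))) := IsLocalization.map_units _ y
  have hg0 : g ≠ 0 := by
    rintro rfl
    rw [map_zero] at hsurj
    exact hf (hyu.mul_left_eq_zero.mp hsurj)
  set d := g.order.toNat with hd
  have hdec := (X_pow_order_mul_divXPowOrder (f := g))
  set g₁ := divXPowOrder g with hg₁
  have hg₁0 : PowerSeries.constantCoeff (R := PowerSeries k) g₁ ≠ 0 :=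
    constantCoeff_divided_ne_zero hg0
  obtain ⟨u, m, ρ, hρ, hgu⟩ := weierstrass_preparation g₁ hg₁0
  set p : Polynomial (FractionRing (PowerSeries k)) :=
    Polynomial.X ^ m - ∑ i ∈ Finset.range m, Polynomial.C
      (algebraMap (PowerSeries k) (FractionRing (PowerSeries k))
        (PowerSeries.mk fun n =>
          PowerSeries.coeff (R := k) i (PowerSeries.coeff (R := PowerSeries k) n ρ)))
      * Polynomial.X ^ i with hp
  have hphip : phi k p = algebraMap (PowerSeries (PowerSeries k)) _
      (PowerSeries.C (R := PowerSeries k) ((PowerSeries.X : k⟦X⟧) ^ m) - ρ) := by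
    rw [hp, map_sub, map_pow, phi_X, map_sum, map_sub, sElt_pow]
    congr 1
    conv_rhs => rw [rho_eq_sum ρ m hρ]
    rw [map_sum]
    refine Finset.sum_congr rfl fun i _ => ?_
    rw [map_mul, phi_C, Lmap_eq, map_mul, map_pow, phi_X, sElt_pow]
    rfl
  obtain ⟨U, hU⟩ := (u.isUnit.map (algebraMap (PowerSeries (PowerSeries k))
      (Localization.Away (PowerSeries.X : PowerSeries (PowerSeries k)))))
  obtain ⟨uX, huX⟩ := isUnit_algebraMap_X (k := k)
  obtain ⟨uy, huy⟩ := hyu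
  refine ⟨uX ^ d * U * uy⁻¹, p, ?_⟩
  have key : algebraMap (PowerSeries (PowerSeries k))
      (Localization.Away (PowerSeries.X : PowerSeries (PowerSeries k))) g
      = ↑(uX ^ d) * ↑U * phi k p := by
    calc algebraMap (PowerSeries (PowerSeries k)) _ g
        = algebraMap (PowerSeries (PowerSeries k)) _
            ((PowerSeries.X : PowerSeries (PowerSeries k)) ^ d * g₁) := by rw [hdec]
      _ = (algebraMap (PowerSeries (PowerSeries k)) _ (PowerSeries.X : PowerSeries (PowerSeries k))) ^ d
            * algebraMap (PowerSeries (PowerSeries k)) _ g₁ := by rw [map_mul, map_pow]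
      _ = _ := by
          rw [hgu, map_mul, ← hU, ← huX, Units.val_pow_eq_pow_val, hphip, mul_assoc]
  have hfg : f = algebraMap (PowerSeries (PowerSeries k))
      (Localization.Away (PowerSeries.X : PowerSeries (PowerSeries k))) g * ↑uy⁻¹ := by
    rw [← hsurj, ← huy, mul_assoc, Units.mul_inv, mul_one]
  rw [hfg, key, Units.val_mul, Units.val_mul]
  ring

variable (k) in
theorem sloc_domain :
    IsDomain (Localization.Away (PowerSeries.X : PowerSeries (PowerSeries k))) :=
  IsLocalization.isDomain_localization
    (powers_le_nonZeroDivisors_of_noZeroDivisors PowerSeries.X_ne_zero)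

variable (k) in
theorem sloc_pid :
    IsPrincipalIdealRing (Localization.Away (PowerSeries.X : PowerSeries (PowerSeries k))) := by
  constructor
  intro I
  obtain ⟨⟨p0, hp0⟩⟩ : (Ideal.comap (phi k) I).IsPrincipal := IsPrincipalIdealRing.principal _
  refine ⟨⟨phi k p0, ?_⟩⟩
  apply le_antisymm
  · intro x hx
    by_cases hx0 : x = 0
    · exact hx0 ▸ Submodule.zero_mem _
    obtain ⟨u, p, hx'⟩ := exists_unit_mul_phi x hx0
    have hφp : phi k p ∈ I := by
      have h1 : phi k p = ↑u⁻¹ * x := by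
        rw [hx', ← mul_assoc, Units.inv_mul, one_mul]
      rw [h1]
      exact Ideal.mul_mem_left _ _ hx
    have hpJ : p ∈ Ideal.comap (phi k) I := Ideal.mem_comap.mpr hφp
    rw [hp0] at hpJ
    obtain ⟨c, hc⟩ := Ideal.mem_span_singleton.mp hpJ
    exact Ideal.mem_span_singleton.mpr ⟨↑u * phi k c, by rw [hx', hc, map_mul]; ring⟩
  · rw [Ideal.submodule_span_eq, Ideal.span_le, Set.singleton_subset_iff]
    have : p0 ∈ Ideal.comap (phi k) I := by
      rw [hp0]
      exact Ideal.mem_span_singleton_self p0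
    exact Ideal.mem_comap.mp this

end WPrep

/-- Let `k` be a field.  The localization `k[[s,t]][t⁻¹]` of the formal power series ring
in two variables obtained by inverting `t` is a principal ideal domain. -/
theorem powerSeries_two_vars_invert_t_isPID
    (k : Type*) [Field k] :
    IsDomain (Localization.Away (MvPowerSeries.X 1 : MvPowerSeries (Fin 2) k)) ∧
    IsPrincipalIdealRing
      (Localization.Away (MvPowerSeries.X 1 : MvPowerSeries (Fin 2) k)) := by
  have H : (Submonoid.powers (MvPowerSeries.X 1 : MvPowerSeries (Fin 2) k)).map
      (WPrep.T : MvPowerSeries (Fin 2) k ≃+* PowerSeries (PowerSeries k)).toMonoidHom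
      = Submonoid.powers (PowerSeries.X : PowerSeries (PowerSeries k)) := by
    rw [Submonoid.map_powers]
    congr 1
    exact WPrep.T_X_one
  let E := IsLocalization.ringEquivOfRingEquiv
    (Localization.Away (MvPowerSeries.X 1 : MvPowerSeries (Fin 2) k))
    (Localization.Away (PowerSeries.X : PowerSeries (PowerSeries k)))
    (WPrep.T : MvPowerSeries (Fin 2) k ≃+* PowerSeries (PowerSeries k)) H
  haveI := WPrep.sloc_domain k
  haveI := WPrep.sloc_pid k
  exact ⟨Function.Injective.isDomain E.toRingHom E.injective,
    IsPrincipalIdealRing.of_surjective E.symm.toRingHom E.symm.surjective⟩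
end
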